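/- arXiv:math/0411277 — 4 statements merged into one kernel-verified Lean document; each statement's English description precedes it below -/
import Mathlib

section
/- Let B be a 2m×2m skew-symmetric matrix and define the α-pfaffian pf^(α)(B) = ∑_{σ∈S_m} α^{m-ν(σ)} ∏_{j=1}^{ν(σ)} P(B)(σ^(j)), where σ = σ^(1)···σ^(ν(σ)) is the cycle decomposition. Then pf^(α)({}^tJ_m B J_m) = pf^(α)(B), where J_m is the block-diagonal matrix with blocks [[0,1],[-1,0]]. -/
open Matrix
open scoped Classical

/-- The `(i,j)` entry (indices in `ZMod 2`) of the `2 × 2` block `B(r,s)` of `B`. -/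
def Bblk {m : ℕ} (B : Matrix (Fin (2 * m)) (Fin (2 * m)) ℂ) (r s : Fin m)
    (i j : ZMod 2) : ℂ :=
  B ⟨2 * r.val + i.val, by have := r.isLt; have := ZMod.val_lt i; omega⟩
    ⟨2 * s.val + j.val, by have := s.isLt; have := ZMod.val_lt j; omega⟩

/-- `P(B)(τ)` for the cycle `τ = (k 0, …, k (r-1))`. -/
noncomputable def Pcyc {m r : ℕ} [NeZero r] (B : Matrix (Fin (2 * m)) (Fin (2 * m)) ℂ)
    (k : Fin r → Fin m) : ℂ :=
  (1 / 2) * ∑ i : Fin r → ZMod 2,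
    (∏ j, (-1 : ℂ) ^ (i j).val) * ∏ j, Bblk B (k j) (k (j + 1)) (i j) (i (j + 1) + 1)

/-- The set of minimal representatives of the cycles (orbits) of `σ`. -/
noncomputable def reps {m : ℕ} (σ : Equiv.Perm (Fin m)) : Finset (Fin m) :=
  Finset.univ.filter fun x => ∀ n : ℕ, x ≤ (σ ^ n) x

/-- The number of cycles (orbits, including fixed points) of `σ`. -/
noncomputable def nu {m : ℕ} (σ : Equiv.Perm (Fin m)) : ℕ := (reps σ).card

/-- The length of the cycle of `σ` through `x`. -/
noncomputable def cycLen {m : ℕ} (σ : Equiv.Perm (Fin m)) (x : Fin m) : ℕ :=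
  orderOf (σ.cycleOf x)

/-- The α-pfaffian `pf^(α)(B) = ∑_σ α^{m-ν(σ)} ∏ⱼ P(B)(σ⁽ʲ⁾)`, the product being
over the cycles of `σ`, each represented by its minimal element. -/
noncomputable def apf {m : ℕ} (α : ℂ) (B : Matrix (Fin (2 * m)) (Fin (2 * m)) ℂ) : ℂ :=
  ∑ σ : Equiv.Perm (Fin m), α ^ (m - nu σ) *
    ∏ x ∈ reps σ,
      haveI : NeZero (cycLen σ x) := ⟨(orderOf_pos _).ne'⟩
      Pcyc B (fun j : Fin (cycLen σ x) => (σ ^ (j : ℕ)) x)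

/-- The `2m × 2m` block-diagonal matrix `J_m` with diagonal blocks `[[0,1],[-1,0]]`. -/
def Jmat (m : ℕ) : Matrix (Fin (2 * m)) (Fin (2 * m)) ℂ :=
  fun i j => if i.val % 2 = 0 ∧ j.val = i.val + 1 then 1
    else if j.val % 2 = 0 ∧ i.val = j.val + 1 then -1 else 0

/-- The partner index: flips parity within a `2 × 2` block. -/
def pt {m : ℕ} (p : Fin (2 * m)) : Fin (2 * m) :=
  ⟨if p.val % 2 = 0 then p.val + 1 else p.val - 1, by have := p.isLt; split <;> omega⟩

lemma J_col {m : ℕ} (p k : Fin (2 * m)) :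
    Jmat m k p = if k = pt p then (if p.val % 2 = 0 then (-1 : ℂ) else 1) else 0 := by
  by_cases hk : k = pt p
  · subst hk
    rw [if_pos rfl]
    rcases Nat.even_or_odd p.val with h | h
    · have hp : p.val % 2 = 0 := Nat.even_iff.mp h
      have h1 : (pt p).val = p.val + 1 := by simp [pt, hp]
      simp only [Jmat, h1]
      rw [if_neg (by omega), if_pos ⟨hp, trivial⟩, if_pos hp]
    · have hp : p.val % 2 = 1 := Nat.odd_iff.mp h
      have h1 : (pt p).val = p.val - 1 := by simp [pt, hp]
      simp only [Jmat, h1]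
      rw [if_pos ⟨by omega, by omega⟩, if_neg (by omega)]
  · rw [if_neg hk]
    have hv : k.val ≠ (pt p).val := fun h => hk (Fin.ext h)
    simp only [Jmat]
    rcases Nat.even_or_odd p.val with h | h
    · have hp : p.val % 2 = 0 := Nat.even_iff.mp h
      have h1 : (pt p).val = p.val + 1 := by simp [pt, hp]
      rw [h1] at hv
      rw [if_neg (by omega), if_neg (by omega)]
    · have hp : p.val % 2 = 1 := Nat.odd_iff.mp h
      have h1 : (pt p).val = p.val - 1 := by simp [pt, hp]
      rw [h1] at hv
      rw [if_neg (by omega), if_neg (by omega)]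

lemma mul_J_apply {m : ℕ} (A : Matrix (Fin (2 * m)) (Fin (2 * m)) ℂ) (p q : Fin (2 * m)) :
    (A * Jmat m) p q = (if q.val % 2 = 0 then (-1 : ℂ) else 1) * A p (pt q) := by
  rw [Matrix.mul_apply]
  rw [Fintype.sum_eq_single (pt q)]
  · rw [J_col q (pt q), if_pos rfl]; ring
  · intro k hk
    rw [J_col q k, if_neg hk, mul_zero]

lemma J_mul_apply {m : ℕ} (A : Matrix (Fin (2 * m)) (Fin (2 * m)) ℂ) (p q : Fin (2 * m)) :
    ((Jmat m)ᵀ * A) p q = (if p.val % 2 = 0 then (-1 : ℂ) else 1) * A (pt p) q := by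
  rw [Matrix.mul_apply]
  rw [Fintype.sum_eq_single (pt p)]
  · rw [Matrix.transpose_apply, J_col p (pt p), if_pos rfl]
  · intro k hk
    rw [Matrix.transpose_apply, J_col p k, if_neg hk, zero_mul]

lemma conj_apply {m : ℕ} (B : Matrix (Fin (2 * m)) (Fin (2 * m)) ℂ) (p q : Fin (2 * m)) :
    ((Jmat m)ᵀ * B * Jmat m) p q =
      (if p.val % 2 = 0 then (-1 : ℂ) else 1) * (if q.val % 2 = 0 then (-1 : ℂ) else 1)
        * B (pt p) (pt q) := by
  rw [mul_J_apply, J_mul_apply]; ring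

lemma zmod2 (a : ZMod 2) : (a.val = 0 ∧ (a + 1).val = 1) ∨ (a.val = 1 ∧ (a + 1).val = 0) := by
  revert a; decide

lemma Bblk_conj {m : ℕ} (B : Matrix (Fin (2 * m)) (Fin (2 * m)) ℂ) (r s : Fin m)
    (a b : ZMod 2) :
    Bblk ((Jmat m)ᵀ * B * Jmat m) r s a b
      = (-1 : ℂ) ^ a.val * (-1 : ℂ) ^ b.val * Bblk B r s (a + 1) (b + 1) := by
  unfold Bblk
  rw [conj_apply]
  have hpt : ∀ (x : Fin m) (c : ZMod 2) (h : 2 * x.val + c.val < 2 * m)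
      (h' : 2 * x.val + (c + 1).val < 2 * m),
      pt ⟨2 * x.val + c.val, h⟩ = ⟨2 * x.val + (c + 1).val, h'⟩ := by
    intro x c h h'
    rcases zmod2 c with ⟨h0, h1⟩ | ⟨h0, h1⟩ <;>
      (apply Fin.ext; simp only [pt, h0, h1, Nat.mul_add_mod]; norm_num)
  rw [hpt r a _ (by have := r.isLt; have := ZMod.val_lt (a + 1); omega),
    hpt s b _ (by have := s.isLt; have := ZMod.val_lt (b + 1); omega)]
  rcases zmod2 a with ⟨h0, h1⟩ | ⟨h0, h1⟩ <;> rcases zmod2 b with ⟨g0, g1⟩ | ⟨g0, g1⟩ <;>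
    simp only [h0, h1, g0, g1, Nat.mul_add_mod] <;> norm_num

lemma Pcyc_conj {m r : ℕ} [NeZero r] (B : Matrix (Fin (2 * m)) (Fin (2 * m)) ℂ)
    (k : Fin r → Fin m) :
    Pcyc ((Jmat m)ᵀ * B * Jmat m) k = Pcyc B k := by
  unfold Pcyc
  congr 1
  apply Fintype.sum_bijective (fun (i : Fin r → ZMod 2) (j : Fin r) => i j + 1)
    (Function.Involutive.bijective (fun i => by
      funext j
      show i j + 1 + 1 = i j
      have : (1 : ZMod 2) + 1 = 0 := rfl
      rw [add_assoc, this, add_zero]))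
  intro i
  show _ = (∏ j, (-1 : ℂ) ^ ((i j + 1)).val) *
      ∏ j, Bblk B (k j) (k (j + 1)) (i j + 1) (i (j + 1) + 1 + 1)
  simp only [Bblk_conj, Finset.prod_mul_distrib]
  have hT : (∏ j : Fin r, (-1 : ℂ) ^ ((i (j + 1) + 1).val)) =
      ∏ j : Fin r, (-1 : ℂ) ^ ((i j + 1).val) :=
    Fintype.prod_bijective (fun j : Fin r => j + 1) (Equiv.addRight (1 : Fin r)).bijective
      _ _ (fun j => rfl)
  rw [hT]
  set S := ∏ j : Fin r, (-1 : ℂ) ^ (i j).val with hSdef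
  set T := ∏ j : Fin r, (-1 : ℂ) ^ ((i j + 1).val) with hTdef
  set X := ∏ j : Fin r, Bblk B (k j) (k (j + 1)) (i j + 1) (i (j + 1) + 1 + 1) with hXdef
  have hS : S * S = 1 := by
    rw [hSdef, ← Finset.prod_mul_distrib]
    apply Finset.prod_eq_one
    intro j _
    rw [← pow_add]
    exact Even.neg_one_pow ⟨_, rfl⟩
  linear_combination (T * X) * hS

theorem apf_conj_J (m : ℕ) (α : ℂ) (B : Matrix (Fin (2 * m)) (Fin (2 * m)) ℂ)
    (hB : Bᵀ = -B) :
    apf α ((Jmat m)ᵀ * B * Jmat m) = apf α B := by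
  unfold apf
  refine Finset.sum_congr rfl fun σ _ => ?_
  congr 1
  refine Finset.prod_congr rfl fun x _ => ?_
  haveI : NeZero (cycLen σ x) := ⟨(orderOf_pos _).ne'⟩
  exact Pcyc_conj B _
end

section
/- Let B be a 2m×2m skew-symmetric matrix with 2×2 blocks and J_m the standard block-diagonal skew form. Then pf^(α)(J_m + zB) = ∑_{S ⊆ {1,...,m}} z^{|S|} pf^(α)(B[S]), where B[S] is the skew-symmetric submatrix formed by the blocks of B indexed by S. -/
open Matrix
open scoped Classical

/-- The embedding `Fin (2k) → Fin (2m)` induced on block positions by `t : Fin k → Fin m`. -/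
def emb {m k : ℕ} (t : Fin k → Fin m) (i : Fin (2 * k)) : Fin (2 * m) :=
  have h : i.val / 2 < k := by have := i.isLt; omega
  ⟨2 * (t ⟨i.val / 2, h⟩).val + i.val % 2, by have := (t ⟨i.val / 2, h⟩).isLt; omega⟩

/-- The `2k × 2k` submatrix of `B` formed by the `2 × 2` blocks `B(t i, t j)`. -/
def blockSub {m k : ℕ} (B : Matrix (Fin (2 * m)) (Fin (2 * m)) ℂ) (t : Fin k → Fin m) :
    Matrix (Fin (2 * k)) (Fin (2 * k)) ℂ :=
  B.submatrix (emb t) (emb t)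
section Aux
open Equiv Equiv.Perm Finset

variable {m : ℕ}

/-! ### Basic orbit facts -/

lemma pow_apply_eq_self_of_fix {σ : Equiv.Perm (Fin m)} {x : Fin m} (h : σ x = x) (n : ℕ) :
    (σ ^ n) x = x := by
  induction n with
  | zero => rfl
  | succ n ih => rw [pow_succ, Equiv.Perm.mul_apply, h, ih]

lemma cycLen_dvd_iff {σ : Equiv.Perm (Fin m)} {x : Fin m} {n : ℕ} :
    (σ ^ n) x = x ↔ cycLen σ x ∣ n := by
  constructor
  · intro h
    by_cases hx : σ x = x
    · have h1 : σ.cycleOf x = 1 := (Equiv.Perm.cycleOf_eq_one_iff σ).mpr hx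
      simp [cycLen, h1]
    · have hc := Equiv.Perm.isCycle_cycleOf σ hx
      have hcx : σ.cycleOf x x ≠ x := by rwa [Equiv.Perm.cycleOf_apply_self]
      have h2 : (σ.cycleOf x) ^ n = 1 :=
        (hc.pow_eq_one_iff' hcx).mpr (by rwa [Equiv.Perm.cycleOf_pow_apply_self])
      exact orderOf_dvd_of_pow_eq_one h2
  · intro h
    have h1 : (σ.cycleOf x) ^ n = 1 := orderOf_dvd_iff_pow_eq_one.mp h
    have := Equiv.Perm.cycleOf_pow_apply_self σ x n
    rw [h1] at this
    simpa using this.symm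

lemma cycLen_pos (σ : Equiv.Perm (Fin m)) (x : Fin m) : 0 < cycLen σ x := orderOf_pos _

lemma cycLen_eq_one_of_fix {σ : Equiv.Perm (Fin m)} {x : Fin m} (h : σ x = x) :
    cycLen σ x = 1 :=
  Nat.dvd_one.mp (cycLen_dvd_iff.mp (by rw [pow_one, h]))

lemma sameCycle_pow {σ : Equiv.Perm (Fin m)} (x : Fin m) (n : ℕ) :
    σ.SameCycle x ((σ ^ n) x) := ⟨(n : ℤ), by rw [zpow_natCast]⟩

lemma fix_of_sameCycle {σ : Equiv.Perm (Fin m)} {x y : Fin m} (h : σ.SameCycle x y)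
    (hx : σ x = x) : σ y = y := by
  obtain ⟨i, hi, rfl⟩ := h.exists_pow_eq'
  rw [pow_apply_eq_self_of_fix hx i]; exact hx

/-! ### reps facts -/

lemma mem_reps {σ : Equiv.Perm (Fin m)} {x : Fin m} :
    x ∈ reps σ ↔ ∀ n : ℕ, x ≤ (σ ^ n) x := by simp [reps]

lemma fix_mem_reps {σ : Equiv.Perm (Fin m)} {x : Fin m} (h : σ x = x) : x ∈ reps σ :=
  mem_reps.mpr fun n => le_of_eq (pow_apply_eq_self_of_fix h n).symm

lemma exists_rep {σ : Equiv.Perm (Fin m)} (y : Fin m) :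
    ∃ x ∈ reps σ, σ.SameCycle y x := by
  classical
  set O : Finset (Fin m) := Finset.univ.filter (fun w => σ.SameCycle y w) with hO
  have hyO : y ∈ O := by simp only [hO, Finset.mem_filter, Finset.mem_univ, true_and]; exact Equiv.Perm.SameCycle.refl σ y
  refine ⟨O.min' ⟨y, hyO⟩, ?_, ?_⟩
  · rw [mem_reps]
    intro n
    refine O.min'_le _ ?_
    have h1 : σ.SameCycle y (O.min' ⟨y, hyO⟩) := by
      have := O.min'_mem ⟨y, hyO⟩
      simpa [hO] using this
    simpa [hO] using h1.trans (sameCycle_pow _ n)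
  · have := O.min'_mem ⟨y, hyO⟩
    simpa [hO] using this

lemma reps_unique {σ : Equiv.Perm (Fin m)} {x₁ x₂ : Fin m} (h1 : x₁ ∈ reps σ)
    (h2 : x₂ ∈ reps σ) (h : σ.SameCycle x₁ x₂) : x₁ = x₂ := by
  obtain ⟨i, hi, hix⟩ := h.exists_pow_eq'
  obtain ⟨i', hi', hix'⟩ := h.symm.exists_pow_eq'
  refine le_antisymm ?_ ?_
  · rw [← hix]; exact mem_reps.mp h1 i
  · rw [← hix']; exact mem_reps.mp h2 i'

lemma sum_cycLen {σ : Equiv.Perm (Fin m)} :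
    ∑ x ∈ (reps σ).filter (fun x => ¬ σ x = x), cycLen σ x = σ.support.card := by
  classical
  have hsupp : σ.support = ((reps σ).filter (fun x => ¬ σ x = x)).biUnion
      (fun x => (σ.cycleOf x).support) := by
    ext y
    simp only [Finset.mem_biUnion, Finset.mem_filter]
    constructor
    · intro hy
      obtain ⟨x, hx, hsc⟩ := exists_rep (σ := σ) y
      have hxfix : ¬ σ x = x := fun hfix =>
        (Equiv.Perm.mem_support.mp hy) (fix_of_sameCycle hsc.symm hfix)
      refine ⟨x, ⟨hx, hxfix⟩, ?_⟩
      rw [Equiv.Perm.mem_support_cycleOf_iff]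
      exact ⟨hsc.symm, Equiv.Perm.mem_support.mpr hxfix⟩
    · rintro ⟨x, ⟨hx, hxfix⟩, hy⟩
      rw [Equiv.Perm.mem_support_cycleOf_iff] at hy
      rw [Equiv.Perm.mem_support]
      intro hyfix
      exact hxfix (fix_of_sameCycle hy.1.symm hyfix)
  rw [hsupp, Finset.card_biUnion]
  · refine Finset.sum_congr rfl fun x hx => ?_
    rw [Finset.mem_filter] at hx
    exact (Equiv.Perm.isCycle_cycleOf σ hx.2).orderOf
  · intro x₁ h1 x₂ h2 hne
    rw [Finset.mem_coe, Finset.mem_filter] at h1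
    rw [Finset.mem_coe, Finset.mem_filter] at h2
    rw [Function.onFun, Finset.disjoint_left]
    intro y hy1 hy2
    rw [Equiv.Perm.mem_support_cycleOf_iff] at hy1
    rw [Equiv.Perm.mem_support_cycleOf_iff] at hy2
    exact hne (reps_unique h1.1 h2.1 (hy1.1.trans hy2.1.symm))

end Aux
section Aux2
open Equiv Equiv.Perm Finset

variable {m : ℕ}

/-! ### Bblk and Pcyc computations -/

lemma Bblk_add (A C : Matrix (Fin (2*m)) (Fin (2*m)) ℂ) (r s : Fin m) (i j : ZMod 2) :
    Bblk (A + C) r s i j = Bblk A r s i j + Bblk C r s i j := rfl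

lemma Bblk_smul (z : ℂ) (A : Matrix (Fin (2*m)) (Fin (2*m)) ℂ) (r s : Fin m) (i j : ZMod 2) :
    Bblk (z • A) r s i j = z * Bblk A r s i j := rfl

lemma Bblk_J_ne {r s : Fin m} (h : r ≠ s) (i j : ZMod 2) : Bblk (Jmat m) r s i j = 0 := by
  have hi : i.val < 2 := ZMod.val_lt i
  have hj : j.val < 2 := ZMod.val_lt j
  have hrs : r.val ≠ s.val := fun hh => h (Fin.ext hh)
  unfold Bblk Jmat
  dsimp only
  split_ifs with h1 h2
  · exfalso; omega
  · exfalso; omega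
  · rfl

lemma Bblk_J_diag01 (x : Fin m) : Bblk (Jmat m) x x 0 1 = 1 := by
  unfold Bblk Jmat
  dsimp only
  rw [if_pos]
  simp only [ZMod.val_zero, ZMod.val_one]
  constructor <;> first | omega | trivial

lemma Bblk_J_diag10 (x : Fin m) : Bblk (Jmat m) x x 1 0 = -1 := by
  unfold Bblk Jmat
  dsimp only
  rw [if_neg, if_pos]
  · simp only [ZMod.val_zero, ZMod.val_one]
    constructor <;> first | omega | trivial
  · simp only [ZMod.val_zero, ZMod.val_one]
    intro hcon
    omega

lemma Pcyc_cast {r r' : ℕ} [NeZero r] [NeZero r'] (h : r = r')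
    (A : Matrix (Fin (2*m)) (Fin (2*m)) ℂ) (k : Fin r → Fin m) (k' : Fin r' → Fin m)
    (hk : ∀ j : Fin r, k j = k' (Fin.cast h j)) : Pcyc A k = Pcyc A k' := by
  subst h
  obtain rfl : k = k' := funext hk
  congr!

lemma emb_apply_mk {k : ℕ} (t : Fin k → Fin m) (r : Fin k) (iv : ℕ) (hiv : iv < 2)
    (pf : 2 * r.val + iv < 2 * k) :
    emb t ⟨2 * r.val + iv, pf⟩ =
      ⟨2 * (t r).val + iv, by have := (t r).isLt; omega⟩ := by
  unfold emb
  apply Fin.ext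
  dsimp only
  have hd : (2 * r.val + iv) / 2 = r.val := by omega
  have hm2 : (2 * r.val + iv) % 2 = iv := by omega
  simp only [hd, hm2, Fin.eta]

lemma Bblk_blockSub {k : ℕ} (B : Matrix (Fin (2*m)) (Fin (2*m)) ℂ) (t : Fin k → Fin m)
    (r s : Fin k) (i j : ZMod 2) :
    Bblk (blockSub B t) r s i j = Bblk B (t r) (t s) i j := by
  have hi : i.val < 2 := ZMod.val_lt i
  have hj : j.val < 2 := ZMod.val_lt j
  unfold Bblk blockSub
  rw [Matrix.submatrix_apply, emb_apply_mk t r i.val hi, emb_apply_mk t s j.val hj]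

lemma Pcyc_blockSub {k r : ℕ} [NeZero r] (B : Matrix (Fin (2*m)) (Fin (2*m)) ℂ)
    (t : Fin k → Fin m) (kk : Fin r → Fin k) :
    Pcyc (blockSub B t) kk = Pcyc B (fun j => t (kk j)) := by
  unfold Pcyc
  simp only [Bblk_blockSub]

lemma Pcyc_J_add_offdiag {r : ℕ} [NeZero r] (z : ℂ) (B : Matrix (Fin (2*m)) (Fin (2*m)) ℂ)
    (k : Fin r → Fin m) (hk : ∀ j : Fin r, k j ≠ k (j + 1)) :
    Pcyc (Jmat m + z • B) k = z ^ r * Pcyc B k := by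
  unfold Pcyc
  have hb : ∀ (i : Fin r → ZMod 2) (j : Fin r),
      Bblk (Jmat m + z • B) (k j) (k (j+1)) (i j) (i (j+1) + 1)
        = z * Bblk B (k j) (k (j+1)) (i j) (i (j+1) + 1) := fun i j => by
    rw [Bblk_add, Bblk_J_ne (hk j), Bblk_smul, zero_add]
  simp only [hb, Finset.prod_mul_distrib, Finset.prod_const, Finset.card_univ,
    Fintype.card_fin]
  rw [eq_comm, mul_left_comm]
  congr 1
  rw [Finset.mul_sum]
  exact Finset.sum_congr rfl fun i _ => by ring

lemma Pcyc_one (A : Matrix (Fin (2*m)) (Fin (2*m)) ℂ) (x : Fin m) :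
    Pcyc A (fun _ : Fin 1 => x) = (1/2) * (Bblk A x x 0 1 - Bblk A x x 1 0) := by
  unfold Pcyc
  congr 1
  rw [Fintype.sum_equiv (Equiv.funUnique (Fin 1) (ZMod 2))
    _ (fun c => ((-1 : ℂ) ^ (c : ZMod 2).val) * Bblk A x x c (c + 1))
    (fun f => by
      have hf : ∀ j : Fin 1, f j = f 0 := fun j => by rw [Subsingleton.elim j 0]
      simp [Fin.prod_univ_one, Subsingleton.elim ((0 : Fin 1) + 1) (0 : Fin 1), hf])]
  have huniv : (Finset.univ : Finset (ZMod 2)) = {0, 1} := by decide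
  rw [huniv, Finset.sum_pair (by decide : (0 : ZMod 2) ≠ 1)]
  have e1 : ((0 : ZMod 2) + 1) = 1 := by decide
  have e2 : ((1 : ZMod 2) + 1) = 0 := by decide
  rw [e1, e2, ZMod.val_zero, ZMod.val_one]
  ring

end Aux2
section Aux3
open Equiv Equiv.Perm Finset
variable {m : ℕ}

/-- The `Pcyc` value of the cycle of `σ` through `x`. -/
noncomputable def orb (A : Matrix (Fin (2*m)) (Fin (2*m)) ℂ) (σ : Equiv.Perm (Fin m))
    (x : Fin m) : ℂ :=
  haveI : NeZero (cycLen σ x) := ⟨(orderOf_pos _).ne'⟩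
  Pcyc A (fun j : Fin (cycLen σ x) => (σ ^ (j : ℕ)) x)

lemma apf_eq (α : ℂ) (A : Matrix (Fin (2*m)) (Fin (2*m)) ℂ) :
    apf α A = ∑ σ : Equiv.Perm (Fin m), α ^ (m - nu σ) * ∏ x ∈ reps σ, orb A σ x := rfl

lemma orb_fix {σ : Equiv.Perm (Fin m)} {x : Fin m} (h : σ x = x) (z : ℂ)
    (B : Matrix (Fin (2*m)) (Fin (2*m)) ℂ) :
    orb (Jmat m + z • B) σ x = 1 + z * orb B σ x := by
  unfold orb
  haveI : NeZero (cycLen σ x) := ⟨(orderOf_pos _).ne'⟩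
  have h1 : cycLen σ x = 1 := cycLen_eq_one_of_fix h
  rw [Pcyc_cast (A := Jmat m + z • B) h1 _ (fun _ => x)
      (fun j => pow_apply_eq_self_of_fix h j),
    Pcyc_cast (A := B) h1 _ (fun _ => x) (fun j => pow_apply_eq_self_of_fix h j),
    Pcyc_one, Pcyc_one, Bblk_add, Bblk_add, Bblk_smul, Bblk_smul, Bblk_J_diag01,
    Bblk_J_diag10]
  ring

lemma orb_notfix {σ : Equiv.Perm (Fin m)} {x : Fin m} (h : ¬ σ x = x) (z : ℂ)
    (B : Matrix (Fin (2*m)) (Fin (2*m)) ℂ) :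
    orb (Jmat m + z • B) σ x = z ^ cycLen σ x * orb B σ x := by
  unfold orb
  haveI : NeZero (cycLen σ x) := ⟨(orderOf_pos _).ne'⟩
  set L := cycLen σ x with hL
  apply Pcyc_J_add_offdiag
  intro j
  have hL1 : L ≠ 1 := by
    intro h1
    refine h ?_
    have h2 : (σ ^ 1) x = x := cycLen_dvd_iff.mpr (by rw [← hL, h1])
    rwa [pow_one] at h2
  have hL2 : 2 ≤ L := by have := cycLen_pos σ x; omega
  have hb : ((j + 1 : Fin L)).val = (j.val + 1) % L := by
    rw [Fin.add_def, Fin.val_one', Nat.mod_eq_of_lt (show (1:ℕ) < L from hL2)]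
  intro hEq
  by_cases hcase : j.val + 1 < L
  · rw [hb, Nat.mod_eq_of_lt hcase, pow_succ, Equiv.Perm.mul_apply] at hEq
    exact h ((Equiv.injective _) hEq.symm)
  · have hjL : j.val + 1 = L := by have := j.isLt; omega
    rw [hb, show (j.val + 1) % L = 0 from by rw [hjL, Nat.mod_self], pow_zero] at hEq
    have hds : L ∣ j.val := by
      rw [hL]
      exact cycLen_dvd_iff.mp (by simpa using hEq)
    have := Nat.le_of_dvd (by omega) hds
    have := j.isLt
    omega

end Aux3
section Aux4
open Equiv Equiv.Perm Finset
variable {m : ℕ}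

/-- The order isomorphism `Fin S.card ≃ S`. -/
noncomputable def eS (S : Finset (Fin m)) : Fin S.card ≃ {x : Fin m // x ∈ S} :=
  (S.orderIsoOfFin rfl).toEquiv

lemma tS_eq (S : Finset (Fin m)) (y : Fin S.card) :
    (S.orderEmbOfFin rfl) y = ((eS S) y : Fin m) :=
  (Finset.coe_orderIsoOfFin_apply S rfl y).symm

/-- Extension of a permutation of `Fin S.card` to `Fin m` via `S`. -/
noncomputable def extP (S : Finset (Fin m)) (τ : Equiv.Perm (Fin S.card)) :
    Equiv.Perm (Fin m) :=
  τ.extendDomain (eS S)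

lemma extP_apply_t (S : Finset (Fin m)) (τ : Equiv.Perm (Fin S.card)) (y : Fin S.card) :
    extP S τ (S.orderEmbOfFin rfl y) = S.orderEmbOfFin rfl (τ y) := by
  rw [tS_eq, tS_eq]
  exact Equiv.Perm.extendDomain_apply_image τ (eS S) y

lemma extP_apply_notmem (S : Finset (Fin m)) (τ : Equiv.Perm (Fin S.card)) {x : Fin m}
    (h : x ∉ S) : extP S τ x = x :=
  Equiv.Perm.extendDomain_apply_not_subtype τ (eS S) h

lemma extP_pow (S : Finset (Fin m)) (τ : Equiv.Perm (Fin S.card)) (n : ℕ) :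
    (extP S τ) ^ n = extP S (τ ^ n) :=
  (map_pow (Equiv.Perm.extendDomainHom (eS S)) τ n).symm

lemma extP_pow_apply_t (S : Finset (Fin m)) (τ : Equiv.Perm (Fin S.card)) (n : ℕ)
    (y : Fin S.card) :
    ((extP S τ) ^ n) (S.orderEmbOfFin rfl y) = S.orderEmbOfFin rfl ((τ ^ n) y) := by
  rw [extP_pow, extP_apply_t]

lemma tS_inj (S : Finset (Fin m)) : Function.Injective ⇑(S.orderEmbOfFin rfl) :=
  (S.orderEmbOfFin rfl).injective

lemma tS_mem (S : Finset (Fin m)) (y : Fin S.card) : S.orderEmbOfFin rfl y ∈ S :=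
  Finset.orderEmbOfFin_mem S rfl y

lemma mem_range_tS {S : Finset (Fin m)} {x : Fin m} (h : x ∈ S) :
    ∃ y, S.orderEmbOfFin rfl y = x := by
  have hr := Finset.range_orderEmbOfFin S rfl
  have : x ∈ Set.range ⇑(S.orderEmbOfFin rfl) := by rw [hr]; exact h
  exact this

lemma support_extP_subset (S : Finset (Fin m)) (τ : Equiv.Perm (Fin S.card)) :
    (extP S τ).support ⊆ S := fun x hx => by
  by_contra h
  exact (Equiv.Perm.mem_support.mp hx) (extP_apply_notmem S τ h)

lemma cycLen_extP (S : Finset (Fin m)) (τ : Equiv.Perm (Fin S.card)) (y : Fin S.card) :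
    cycLen (extP S τ) (S.orderEmbOfFin rfl y) = cycLen τ y := by
  apply Nat.dvd_antisymm
  · refine cycLen_dvd_iff.mp ?_
    rw [extP_pow_apply_t, cycLen_dvd_iff.mpr (dvd_refl (cycLen τ y))]
  · refine cycLen_dvd_iff.mp ?_
    have h1 : ((extP S τ) ^ cycLen (extP S τ) (S.orderEmbOfFin rfl y))
        (S.orderEmbOfFin rfl y) = S.orderEmbOfFin rfl y := cycLen_dvd_iff.mpr (dvd_refl _)
    rw [extP_pow_apply_t] at h1
    exact tS_inj S h1

lemma reps_extP_iff (S : Finset (Fin m)) (τ : Equiv.Perm (Fin S.card)) (y : Fin S.card) :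
    S.orderEmbOfFin rfl y ∈ reps (extP S τ) ↔ y ∈ reps τ := by
  rw [mem_reps, mem_reps]
  constructor
  · intro h n
    have := h n
    rw [extP_pow_apply_t] at this
    exact (OrderEmbedding.le_iff_le _).mp this
  · intro h n
    rw [extP_pow_apply_t]
    exact (OrderEmbedding.le_iff_le _).mpr (h n)

lemma reps_extP_inter (S : Finset (Fin m)) (τ : Equiv.Perm (Fin S.card)) :
    reps (extP S τ) ∩ S = (reps τ).image ⇑(S.orderEmbOfFin rfl) := by
  ext x
  rw [Finset.mem_inter, Finset.mem_image]
  constructor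
  · rintro ⟨hrep, hmem⟩
    obtain ⟨y, rfl⟩ := mem_range_tS hmem
    exact ⟨y, (reps_extP_iff S τ y).mp hrep, rfl⟩
  · rintro ⟨y, hy, rfl⟩
    exact ⟨(reps_extP_iff S τ y).mpr hy, tS_mem S y⟩

lemma reps_extP_sdiff (S : Finset (Fin m)) (τ : Equiv.Perm (Fin S.card)) :
    reps (extP S τ) \ S = Finset.univ \ S := by
  ext x
  rw [Finset.mem_sdiff, Finset.mem_sdiff]
  constructor
  · rintro ⟨h1, h2⟩; exact ⟨Finset.mem_univ x, h2⟩
  · rintro ⟨h1, h2⟩; exact ⟨fix_mem_reps (extP_apply_notmem S τ h2), h2⟩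

lemma nu_extP (S : Finset (Fin m)) (τ : Equiv.Perm (Fin S.card)) :
    nu (extP S τ) = nu τ + (m - S.card) := by
  unfold nu
  rw [← Finset.card_inter_add_card_sdiff (reps (extP S τ)) S, reps_extP_inter,
    reps_extP_sdiff, Finset.card_image_of_injective _ (tS_inj S),
    ← Finset.compl_eq_univ_sdiff, Finset.card_compl, Fintype.card_fin]

lemma pres_of_fix {S : Finset (Fin m)} {σ : Equiv.Perm (Fin m)}
    (hfix : ∀ x ∉ S, σ x = x) : ∀ x, x ∈ S ↔ σ x ∈ S := by
  intro x
  constructor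
  · intro hx
    by_contra hnot
    have h1 : σ (σ x) = σ x := hfix _ hnot
    have h2 : σ x = x := σ.injective h1
    rw [h2] at hnot
    exact hnot hx
  · intro hx
    by_contra hnot
    rw [hfix x hnot] at hx
    exact hnot hx

/-- Restriction of a permutation preserving `S` to `Fin S.card`. -/
noncomputable def restr (S : Finset (Fin m)) (σ : Equiv.Perm (Fin m))
    (hpres : ∀ x, x ∈ S ↔ σ x ∈ S) : Equiv.Perm (Fin S.card) :=
  ((eS S).permCongr).symm (σ.subtypePerm (fun x => (hpres x).symm))

lemma extP_restr (S : Finset (Fin m)) (σ : Equiv.Perm (Fin m))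
    (hpres : ∀ x, x ∈ S ↔ σ x ∈ S) (hfix : ∀ x ∉ S, σ x = x) :
    extP S (restr S σ hpres) = σ := by
  apply Equiv.ext
  intro x
  by_cases hx : x ∈ S
  · rw [extP, Equiv.Perm.extendDomain_apply_subtype _ (eS S) hx]
    simp [restr, Equiv.permCongr_apply, Equiv.Perm.subtypePerm_apply]
  · rw [extP_apply_notmem S _ hx, hfix x hx]

lemma extP_inj (S : Finset (Fin m)) {τ τ' : Equiv.Perm (Fin S.card)}
    (h : extP S τ = extP S τ') : τ = τ' := by
  apply Equiv.ext
  intro y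
  apply tS_inj S
  rw [← extP_apply_t, ← extP_apply_t, h]

end Aux4
section Aux5
open Equiv Equiv.Perm Finset
variable {m : ℕ}

lemma orb_extP (S : Finset (Fin m)) (τ : Equiv.Perm (Fin S.card)) (y : Fin S.card)
    (B : Matrix (Fin (2*m)) (Fin (2*m)) ℂ) :
    orb B (extP S τ) (S.orderEmbOfFin rfl y) = orb (blockSub B ⇑(S.orderEmbOfFin rfl)) τ y := by
  haveI : NeZero (cycLen τ y) := ⟨(cycLen_pos τ y).ne'⟩
  haveI : NeZero (cycLen (extP S τ) (S.orderEmbOfFin rfl y)) :=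
    ⟨(cycLen_pos (extP S τ) (S.orderEmbOfFin rfl y)).ne'⟩
  unfold orb
  rw [Pcyc_blockSub]
  exact Pcyc_cast (cycLen_extP S τ y) B _ _ (fun j => extP_pow_apply_t S τ j.val y)

lemma sigma_eq_of_extP {S S' : Finset (Fin m)} (τ : Equiv.Perm (Fin S.card))
    (τ' : Equiv.Perm (Fin S'.card)) (hS : S = S') (h : extP S τ = extP S' τ') :
    (⟨S, τ⟩ : (S : Finset (Fin m)) × Equiv.Perm (Fin S.card)) = ⟨S', τ'⟩ := by
  subst hS
  obtain rfl := extP_inj S h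
  rfl

/-- Forward map of the bijection. -/
noncomputable def toQ : ((S : Finset (Fin m)) × Equiv.Perm (Fin S.card)) →
    ((_ : Equiv.Perm (Fin m)) × Finset (Fin m)) :=
  fun p => ⟨extP p.1 p.2, p.1 \ (extP p.1 p.2).support⟩

/-- Backward map of the bijection. -/
noncomputable def toP : ((_ : Equiv.Perm (Fin m)) × Finset (Fin m)) →
    ((S : Finset (Fin m)) × Equiv.Perm (Fin S.card)) :=
  fun q => ⟨q.1.support ∪ q.2, restr _ q.1 (pres_of_fix (fun x hx =>
    Equiv.Perm.notMem_support.mp (fun hs => hx (Finset.mem_union_left _ hs))))⟩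

lemma toP_toQ (p : (S : Finset (Fin m)) × Equiv.Perm (Fin S.card)) : toP (toQ p) = p := by
  obtain ⟨S, τ⟩ := p
  refine sigma_eq_of_extP _ _ ?_ ?_
  · exact Finset.union_sdiff_of_subset (support_extP_subset S τ)
  · exact extP_restr _ _ _ (fun x hx =>
      Equiv.Perm.notMem_support.mp (fun hs => hx (Finset.mem_union_left _ hs)))

lemma toQ_toP (q : (_ : Equiv.Perm (Fin m)) × Finset (Fin m))
    (hq : q.2 ⊆ (reps q.1).filter (fun x => q.1 x = x)) : toQ (toP q) = q := by
  obtain ⟨σ, T⟩ := q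
  have hdisj : Disjoint σ.support T := by
    rw [Finset.disjoint_right]
    intro x hxT hxs
    have := (Finset.mem_filter.mp (hq hxT)).2
    exact (Equiv.Perm.mem_support.mp hxs) this
  have h1 : extP (σ.support ∪ T) (restr _ σ (pres_of_fix (fun x hx =>
      Equiv.Perm.notMem_support.mp (fun hs => hx (Finset.mem_union_left _ hs))))) = σ :=
    extP_restr _ _ _ (fun x hx =>
      Equiv.Perm.notMem_support.mp (fun hs => hx (Finset.mem_union_left _ hs)))
  unfold toQ toP
  dsimp only
  rw [h1]
  refine congrArg (Sigma.mk σ) ?_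
  rw [Finset.union_sdiff_left]
  exact Finset.sdiff_eq_self_of_disjoint hdisj.symm

lemma toQ_mem (p : (S : Finset (Fin m)) × Equiv.Perm (Fin S.card)) :
    (toQ p).2 ⊆ (reps (toQ p).1).filter (fun x => (toQ p).1 x = x) := by
  obtain ⟨S, τ⟩ := p
  unfold toQ
  dsimp only
  intro x hx
  rw [Finset.mem_sdiff] at hx
  have hfx : extP S τ x = x := Equiv.Perm.notMem_support.mp hx.2
  exact Finset.mem_filter.mpr ⟨fix_mem_reps hfx, hfx⟩

lemma summand_match (S : Finset (Fin m)) (τ : Equiv.Perm (Fin S.card)) (α z : ℂ)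
    (B : Matrix (Fin (2*m)) (Fin (2*m)) ℂ) :
    z ^ S.card * (α ^ (S.card - nu τ) *
        ∏ y ∈ reps τ, orb (blockSub B ⇑(S.orderEmbOfFin rfl)) τ y)
      = α ^ (m - nu (extP S τ)) * (z ^ ((extP S τ).support.card + (S \ (extP S τ).support).card) *
        ∏ x ∈ ((reps (extP S τ)).filter (fun x => ¬ extP S τ x = x)) ∪ (S \ (extP S τ).support),
          orb B (extP S τ) x) := by
  set σ := extP S τ with hσ
  have hsub : σ.support ⊆ S := support_extP_subset S τ
  have hcard : σ.support.card + (S \ σ.support).card = S.card := by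
    rw [Finset.card_sdiff_of_subset hsub]
    have := Finset.card_le_card hsub
    omega
  have hνle : nu τ ≤ S.card := by
    have h1 : (reps τ).card ≤ Fintype.card (Fin S.card) := Finset.card_le_univ _
    rwa [Fintype.card_fin] at h1
  have hSm : S.card ≤ m := by
    have h1 := Finset.card_le_univ S
    rwa [Fintype.card_fin] at h1
  have hexp : m - nu σ = S.card - nu τ := by
    rw [hσ, nu_extP]
    omega
  have hset : ((reps σ).filter (fun x => ¬ σ x = x)) ∪ (S \ σ.support) = reps σ ∩ S := by
    ext x
    constructor
    · intro hx
      rcases Finset.mem_union.mp hx with h1 | h2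
      · have h1' := Finset.mem_filter.mp h1
        exact Finset.mem_inter.mpr ⟨h1'.1, hsub (Equiv.Perm.mem_support.mpr h1'.2)⟩
      · have h2' := Finset.mem_sdiff.mp h2
        have hfx : σ x = x := Equiv.Perm.notMem_support.mp h2'.2
        exact Finset.mem_inter.mpr ⟨fix_mem_reps hfx, h2'.1⟩
    · intro hx
      have hx' := Finset.mem_inter.mp hx
      by_cases hfx : σ x = x
      · exact Finset.mem_union_right _ (Finset.mem_sdiff.mpr
          ⟨hx'.2, Equiv.Perm.notMem_support.mpr hfx⟩)
      · exact Finset.mem_union_left _ (Finset.mem_filter.mpr ⟨hx'.1, hfx⟩)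
  have hprod : ∏ x ∈ reps σ ∩ S, orb B σ x
      = ∏ y ∈ reps τ, orb (blockSub B ⇑(S.orderEmbOfFin rfl)) τ y := by
    rw [hσ, reps_extP_inter, Finset.prod_image (fun y _ y' _ h => tS_inj S h)]
    exact Finset.prod_congr rfl (fun y _ => orb_extP S τ y B)
  rw [hset, hprod, hcard, hexp]
  ring

end Aux5
theorem apf_J_add_smul (m : ℕ) (α z : ℂ) (B : Matrix (Fin (2 * m)) (Fin (2 * m)) ℂ)
    (hB : Bᵀ = -B) :
    apf α (Jmat m + z • B) =
      ∑ S : Finset (Fin m), z ^ S.card * apf α (blockSub B ⇑(S.orderEmbOfFin rfl)) := by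
  classical
  have rhs1 : ∀ S : Finset (Fin m), z ^ S.card * apf α (blockSub B ⇑(S.orderEmbOfFin rfl))
      = ∑ τ : Equiv.Perm (Fin S.card), z ^ S.card * (α ^ (S.card - nu τ) *
          ∏ y ∈ reps τ, orb (blockSub B ⇑(S.orderEmbOfFin rfl)) τ y) := by
    intro S
    rw [apf_eq, Finset.mul_sum]
  rw [Finset.sum_congr rfl (fun S _ => rhs1 S), Finset.sum_sigma']
  rw [apf_eq]
  have step1 : ∀ σ : Equiv.Perm (Fin m),
      α ^ (m - nu σ) * ∏ x ∈ reps σ, orb (Jmat m + z • B) σ x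
        = ∑ T ∈ ((reps σ).filter (fun x => σ x = x)).powerset,
            α ^ (m - nu σ) * (z ^ (σ.support.card + T.card) *
              ∏ x ∈ ((reps σ).filter (fun x => ¬ σ x = x)) ∪ T, orb B σ x) := by
    intro σ
    rw [← Finset.prod_filter_mul_prod_filter_not (reps σ) (fun x => σ x = x)]
    have hNT : ∏ x ∈ (reps σ).filter (fun x => ¬ σ x = x), orb (Jmat m + z • B) σ x
        = z ^ σ.support.card * ∏ x ∈ (reps σ).filter (fun x => ¬ σ x = x), orb B σ x := by
      rw [Finset.prod_congr rfl (fun x hx => orb_notfix (Finset.mem_filter.mp hx).2 z B),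
        Finset.prod_mul_distrib, Finset.prod_pow_eq_pow_sum, sum_cycLen]
    have hFix : ∏ x ∈ (reps σ).filter (fun x => σ x = x), orb (Jmat m + z • B) σ x
        = ∑ T ∈ ((reps σ).filter (fun x => σ x = x)).powerset,
            z ^ T.card * ∏ x ∈ T, orb B σ x := by
      rw [show (∏ x ∈ (reps σ).filter (fun x => σ x = x), orb (Jmat m + z • B) σ x)
          = ∏ x ∈ (reps σ).filter (fun x => σ x = x), (z * orb B σ x + 1) from
        Finset.prod_congr rfl (fun x hx => by
          rw [orb_fix (Finset.mem_filter.mp hx).2 z B]; ring)]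
      rw [Finset.prod_add]
      refine Finset.sum_congr rfl fun T hT => ?_
      rw [Finset.prod_const_one, mul_one, Finset.prod_mul_distrib, Finset.prod_const]
    rw [hFix, hNT, Finset.sum_mul, Finset.mul_sum]
    refine Finset.sum_congr rfl fun T hT => ?_
    have hdisj : Disjoint ((reps σ).filter (fun x => ¬ σ x = x)) T := by
      rw [Finset.disjoint_left]
      intro x hx1 hx2
      have h1 := (Finset.mem_filter.mp hx1).2
      have h2 := (Finset.mem_filter.mp (Finset.mem_powerset.mp hT hx2)).2
      exact h1 h2
    rw [Finset.prod_union hdisj, pow_add]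
    ring
  rw [Finset.sum_congr rfl (fun σ _ => step1 σ), Finset.sum_sigma']
  refine (Finset.sum_bij' (fun p _ => toQ p) (fun q _ => toP q) ?_ ?_ ?_ ?_ ?_).symm
  · intro p hp
    rw [Finset.mem_sigma]
    exact ⟨Finset.mem_univ _, Finset.mem_powerset.mpr (toQ_mem p)⟩
  · intro q hq
    rw [Finset.mem_sigma]
    exact ⟨Finset.mem_univ _, Finset.mem_univ _⟩
  · intro p hp
    exact toP_toQ p
  · intro q hq
    rw [Finset.mem_sigma, Finset.mem_powerset] at hq
    exact toQ_toP q hq.2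
  · intro p hp
    exact summand_match p.1 p.2 α z B
end

section
/- Let B be a 2m×2m complex skew-symmetric matrix such that -J_m B is a non-negative definite Hermitian matrix, where J_m is the block-diagonal matrix with 2×2 blocks [[0,1],[-1,0]]. Then pf(B[S]) ≥ 0 for every subset S ⊆ {1,...,m}, where B[S] is the skew-symmetric submatrix formed by the 2×2 blocks of B indexed by S. In particular pf(B) ≥ 0. -/
open Matrix
open scoped Classical ComplexOrder

/-- The Pfaffian of an `N × N` skew-symmetric matrix (meaningful for even `N`). -/
noncomputable def pf {N : ℕ} {R : Type*} [CommRing R] (A : Matrix (Fin N) (Fin N) R) : R :=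
  ∑ σ ∈ Finset.univ.filter (fun σ : Equiv.Perm (Fin N) =>
      (∀ j : Fin (N / 2),
        (σ ⟨2 * j.val, by have := j.isLt; omega⟩).val
          < (σ ⟨2 * j.val + 1, by have := j.isLt; omega⟩).val) ∧
      (∀ j k : Fin (N / 2), j < k →
        (σ ⟨2 * j.val, by have := j.isLt; omega⟩).val
          < (σ ⟨2 * k.val, by have := k.isLt; omega⟩).val)),
    ((Equiv.Perm.sign σ : ℤ) : R) *
      ∏ j : Fin (N / 2),
        A (σ ⟨2 * j.val, by have := j.isLt; omega⟩) (σ ⟨2 * j.val + 1, by have := j.isLt; omega⟩)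

theorem Equiv.Perm.inv_apply_self {α : Type*} (f : Equiv.Perm α) (x : α) : f⁻¹ (f x) = x :=
  f.symm_apply_apply x

theorem Equiv.Perm.apply_inv_self {α : Type*} (f : Equiv.Perm α) (x : α) : f (f⁻¹ x) = x :=
  f.apply_symm_apply x

namespace PfAux

open Equiv Equiv.Perm Finset

variable {N : ℕ}

/-- even position `2j`. -/
def ev (j : Fin (N / 2)) : Fin N := ⟨2 * j.val, by have := j.isLt; omega⟩

/-- odd position `2j+1`. -/
def od (j : Fin (N / 2)) : Fin N := ⟨2 * j.val + 1, by have := j.isLt; omega⟩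

lemma ev_lt_od (j : Fin (N / 2)) : (ev j).val < (od j).val := by simp [ev, od]

def filt (N : ℕ) : Finset (Equiv.Perm (Fin N)) :=
  Finset.univ.filter (fun σ : Equiv.Perm (Fin N) =>
    (∀ j : Fin (N / 2), (σ (ev j)).val < (σ (od j)).val) ∧
    (∀ j k : Fin (N / 2), j < k → (σ (ev j)).val < (σ (ev k)).val))

noncomputable def term (A : Matrix (Fin N) (Fin N) ℂ) (σ : Equiv.Perm (Fin N)) : ℂ :=
  ((Equiv.Perm.sign σ : ℤ) : ℂ) * ∏ j : Fin (N / 2), A (σ (ev j)) (σ (od j))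

lemma pf_eq (A : Matrix (Fin N) (Fin N) ℂ) : pf A = ∑ σ ∈ filt N, term A σ := rfl

lemma mem_filt {σ : Equiv.Perm (Fin N)} :
    σ ∈ filt N ↔ (∀ j : Fin (N / 2), (σ (ev j)).val < (σ (od j)).val) ∧
      (∀ j k : Fin (N / 2), j < k → (σ (ev j)).val < (σ (ev k)).val) := by
  simp [filt]

def pfun (hN : N % 2 = 0) (x : Fin N) : Fin N :=
  if h : x.val % 2 = 0 then ⟨x.val + 1, by have := x.isLt; omega⟩
  else ⟨x.val - 1, by have := x.isLt; omega⟩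

lemma pfun_val (hN : N % 2 = 0) (x : Fin N) :
    (pfun hN x).val = if x.val % 2 = 0 then x.val + 1 else x.val - 1 := by
  unfold pfun
  by_cases h : x.val % 2 = 0 <;> simp [h]

lemma pfun_invol (hN : N % 2 = 0) (x : Fin N) : pfun hN (pfun hN x) = x := by
  have h1 := pfun_val hN x
  have h2 := pfun_val hN (pfun hN x)
  have := x.isLt
  apply Fin.ext
  by_cases h : x.val % 2 = 0
  · rw [if_pos h] at h1
    rw [h1, if_neg (by omega)] at h2
    omega
  · rw [if_neg h] at h1
    rw [h1, if_pos (by omega)] at h2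
    omega

/-- the "partner" involution `2j ↔ 2j+1`. -/
def pperm (hN : N % 2 = 0) : Equiv.Perm (Fin N) :=
  ⟨pfun hN, pfun hN, pfun_invol hN, pfun_invol hN⟩

lemma pperm_apply (hN : N % 2 = 0) (x : Fin N) :
    ((pperm hN) x).val = if x.val % 2 = 0 then x.val + 1 else x.val - 1 := pfun_val hN x

lemma pperm_ev (hN : N % 2 = 0) (j : Fin (N / 2)) : pperm hN (ev j) = od j := by
  apply Fin.ext; rw [pperm_apply]; simp [ev, od]

lemma pperm_od (hN : N % 2 = 0) (j : Fin (N / 2)) : pperm hN (od j) = ev j := by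
  apply Fin.ext; rw [pperm_apply]; simp [ev, od]

lemma pperm_ne (hN : N % 2 = 0) (x : Fin N) : pperm hN x ≠ x := by
  intro hx
  have := congrArg Fin.val hx
  rw [pperm_apply] at this
  by_cases h : x.val % 2 = 0 <;> simp [h] at this <;> omega


/-! ### Lemmas about `Jmat` -/

lemma two_mul_mod (k : ℕ) : (2 * k) % 2 = 0 := Nat.mul_mod_right 2 k

/-- the partner permutation on `Fin (2*k)`. -/
noncomputable def pp (k : ℕ) : Equiv.Perm (Fin (2 * k)) := pperm (two_mul_mod k)

lemma pp_val {k : ℕ} (x : Fin (2 * k)) :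
    ((pp k) x).val = if x.val % 2 = 0 then x.val + 1 else x.val - 1 := pperm_apply _ x

lemma Jmat_apply_ne {k : ℕ} (i l : Fin (2 * k)) (h : l ≠ pp k i) : Jmat k i l = 0 := by
  have hv := pp_val i
  have := i.isLt
  unfold Jmat
  rw [if_neg, if_neg]
  · rintro ⟨h1, h2⟩
    apply h; apply Fin.ext
    rw [hv, if_neg (by omega)]
    omega
  · rintro ⟨h1, h2⟩
    apply h; apply Fin.ext
    rw [hv, if_pos h1]
    omega

lemma Jmat_apply_pp {k : ℕ} (i : Fin (2 * k)) :
    Jmat k i (pp k i) = if i.val % 2 = 0 then 1 else -1 := by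
  have hv := pp_val i
  have := i.isLt
  unfold Jmat
  by_cases hp : i.val % 2 = 0
  · rw [if_pos hp] at hv
    rw [if_pos hp, if_pos ⟨hp, hv⟩]
  · rw [if_neg hp] at hv
    rw [if_neg hp, if_neg (by rintro ⟨h1, h2⟩; exact hp h1), if_pos ⟨by omega, by omega⟩]

lemma Jmul_apply {k : ℕ} (X : Matrix (Fin (2 * k)) (Fin (2 * k)) ℂ) (i j : Fin (2 * k)) :
    (Jmat k * X) i j = (if i.val % 2 = 0 then 1 else -1) * X (pp k i) j := by
  rw [Matrix.mul_apply]
  rw [Finset.sum_eq_single (pp k i)]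
  · rw [Jmat_apply_pp]
  · intro l _ hl
    rw [Jmat_apply_ne i l hl, zero_mul]
  · intro h; exact absurd (Finset.mem_univ _) h

lemma Jmat_transpose {k : ℕ} : (Jmat k)ᵀ = -(Jmat k) := by
  ext i j
  have := i.isLt; have := j.isLt
  simp only [Matrix.transpose_apply, Matrix.neg_apply]
  unfold Jmat
  split_ifs <;> try norm_num
  all_goals omega

lemma pp_invol {k : ℕ} (x : Fin (2 * k)) : pp k (pp k x) = x := pfun_invol (two_mul_mod k) x

lemma pp_ev {k : ℕ} (j : Fin ((2 * k) / 2)) : pp k (ev j) = od j := pperm_ev (two_mul_mod k) j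

lemma pp_od {k : ℕ} (j : Fin ((2 * k) / 2)) : pp k (od j) = ev j := pperm_od (two_mul_mod k) j

lemma Jmat_mul_Jmat {k : ℕ} : Jmat k * Jmat k = -1 := by
  ext i j
  rw [Jmul_apply]
  simp only [Matrix.neg_apply, Matrix.one_apply]
  by_cases hij : i = j
  · subst hij
    have h2 := Jmat_apply_pp (pp k i)
    rw [pp_invol] at h2
    rw [h2]
    have hv := pp_val i
    have := i.isLt
    by_cases hp : i.val % 2 = 0
    · rw [if_pos hp] at hv
      rw [if_pos hp, if_pos rfl, if_neg (by omega)]; ring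
    · rw [if_neg hp] at hv
      rw [if_neg hp, if_pos rfl, if_pos (by omega)]; ring
  · rw [Jmat_apply_ne (pp k i) j (by intro h; apply hij; rw [h, pp_invol]), if_neg hij]
    ring

lemma one_mem_filt : (1 : Equiv.Perm (Fin N)) ∈ filt N := by
  rw [mem_filt]
  constructor
  · intro j; simp [ev, od]
  · intro j k hjk
    simp only [Equiv.Perm.coe_one, id_eq, ev]
    have : j.val < k.val := hjk
    omega

/-- a strictly monotone self-map of `Fin n` is the identity. -/
lemma strictMono_fin_eq_id {n : ℕ} (f : Fin n → Fin n) (hf : StrictMono f) : ∀ x, f x = x := by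
  have h1 : f = Finset.univ.orderEmbOfFin (by simp) :=
    Finset.orderEmbOfFin_unique (by simp) (fun i => Finset.mem_univ _) hf
  have h2 : (fun x : Fin n => x) = Finset.univ.orderEmbOfFin (by simp) :=
    Finset.orderEmbOfFin_unique (by simp) (fun i => Finset.mem_univ _) strictMono_id
  intro x
  rw [h1, ← h2]

lemma pf_J {k : ℕ} : pf (Jmat k) = 1 := by
  rw [pf_eq]
  rw [Finset.sum_eq_single_of_mem 1 one_mem_filt]
  · unfold term
    simp only [Equiv.Perm.sign_one, Units.val_one, Int.cast_one, Equiv.Perm.coe_one, id_eq,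
      one_mul]
    rw [Finset.prod_eq_one]
    intro j _
    have h := Jmat_apply_pp (k := k) (ev j)
    rw [pp_ev] at h
    rw [h, if_pos (by simp [ev])]
  · intro σ hσ hσ1
    rw [mem_filt] at hσ
    unfold term
    by_cases hall : ∀ j : Fin ((2 * k) / 2), Jmat k (σ (ev j)) (σ (od j)) ≠ 0
    · exfalso
      have hkey : ∀ j : Fin ((2 * k) / 2), (σ (ev j)).val % 2 = 0 ∧
          (σ (od j)).val = (σ (ev j)).val + 1 := by
        intro j
        have h := hall j
        unfold Jmat at h
        by_cases h1 : (σ (ev j)).val % 2 = 0 ∧ (σ (od j)).val = (σ (ev j)).val + 1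
        · exact h1
        · exfalso
          rw [if_neg h1] at h
          by_cases h2 : (σ (od j)).val % 2 = 0 ∧ (σ (ev j)).val = (σ (od j)).val + 1
          · have := hσ.1 j; omega
          · rw [if_neg h2] at h; exact h rfl
      set n := (2 * k) / 2 with hn
      have hρlt : ∀ j : Fin n, (σ (ev j)).val / 2 < n := by
        intro j; have := (σ (ev j)).isLt; omega
      set ρ : Fin n → Fin n := fun j => ⟨(σ (ev j)).val / 2, hρlt j⟩ with hρ
      have hmono : StrictMono ρ := by
        intro a b hab
        have h2 := hσ.2 a b hab
        have ha := (hkey a).1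
        have hb := (hkey b).1
        simp only [hρ, Fin.mk_lt_mk]
        omega
      have hid := strictMono_fin_eq_id ρ hmono
      apply hσ1
      apply Equiv.ext
      intro x
      have hxlt := x.isLt
      have hj : x.val / 2 < n := by omega
      set j : Fin n := ⟨x.val / 2, hj⟩ with hjdef
      have hrj := congrArg Fin.val (hid j)
      simp only [hρ] at hrj
      have hkey1 := (hkey j).1
      have hkey2 := (hkey j).2
      have hevv : (ev j).val = 2 * j.val := rfl
      have hodv : (od j).val = 2 * j.val + 1 := rfl
      have hjv : j.val = x.val / 2 := rfl
      by_cases hx : x.val % 2 = 0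
      · have hxe : x = ev j := by apply Fin.ext; rw [hevv, hjv]; omega
        rw [hxe]
        apply Fin.ext
        simp only [Equiv.Perm.coe_one, id_eq]
        omega
      · have hxo : x = od j := by apply Fin.ext; rw [hodv, hjv]; omega
        rw [hxo]
        apply Fin.ext
        simp only [Equiv.Perm.coe_one, id_eq]
        omega
    · push_neg at hall
      obtain ⟨j, hj⟩ := hall
      rw [Finset.prod_eq_zero (Finset.mem_univ j) hj, mul_zero]


/-! ### Canonical representative of a matching -/

/-- The set of lower members of each pair of an involution. -/
def lowerSet (f : Equiv.Perm (Fin N)) : Finset (Fin N) :=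
  Finset.univ.filter (fun x => x < f x)

lemma mem_lowerSet {f : Equiv.Perm (Fin N)} {x : Fin N} : x ∈ lowerSet f ↔ x < f x := by
  simp [lowerSet]

lemma lowerSet_card (f : Equiv.Perm (Fin N)) (hf1 : ∀ x, f (f x) = x) (hf2 : ∀ x, f x ≠ x) :
    (lowerSet f).card = N / 2 := by
  have himg : (lowerSet f).image f = Finset.univ.filter (fun x => f x < x) := by
    ext y
    simp only [Finset.mem_image, mem_lowerSet, Finset.mem_filter, Finset.mem_univ, true_and]
    constructor
    · rintro ⟨x, hx, rfl⟩
      rw [hf1]; exact hx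
    · intro hy
      exact ⟨f y, by rw [hf1]; exact hy, hf1 y⟩
  have hcard : ((lowerSet f).image f).card = (lowerSet f).card :=
    Finset.card_image_of_injective _ f.injective
  have hunion : lowerSet f ∪ Finset.univ.filter (fun x => f x < x) = Finset.univ := by
    ext x
    simp only [Finset.mem_union, mem_lowerSet, Finset.mem_filter, Finset.mem_univ, true_and,
      iff_true]
    rcases lt_trichotomy x (f x) with h | h | h
    · exact Or.inl h
    · exact absurd h.symm (hf2 x)
    · exact Or.inr h
  have hdisj : Disjoint (lowerSet f) (Finset.univ.filter (fun x => f x < x)) := by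
    rw [Finset.disjoint_left]
    intro a ha hb
    rw [mem_lowerSet] at ha
    simp only [Finset.mem_filter] at hb
    exact absurd (ha.trans hb.2) (lt_irrefl a)
  have hu := Finset.card_union_of_disjoint hdisj
  rw [hunion] at hu
  rw [← himg, hcard] at hu
  simp only [Finset.card_univ, Fintype.card_fin] at hu
  omega

/-- canonical representative permutation attached to a fixed-point-free involution. -/
noncomputable def canonF (hN : N % 2 = 0) (f : Equiv.Perm (Fin N)) : Equiv.Perm (Fin N) :=
  if h : (∀ x, f (f x) = x) ∧ (∀ x, f x ≠ x) then
    Equiv.ofBijective (fun i : Fin N =>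
      if i.val % 2 = 0 then
        (lowerSet f).orderEmbOfFin (lowerSet_card f h.1 h.2) ⟨i.val / 2, by have := i.isLt; omega⟩
      else
        f ((lowerSet f).orderEmbOfFin (lowerSet_card f h.1 h.2) ⟨i.val / 2, by have := i.isLt; omega⟩))
      (by
        set l := (lowerSet f).orderEmbOfFin (lowerSet_card f h.1 h.2) with hl
        have hlmem : ∀ j, l j ∈ lowerSet f := fun j => Finset.orderEmbOfFin_mem _ _ j
        have hmix : ∀ j j', l j ≠ f (l j') := by
          intro j j' hc
          have h1 : (l j : Fin N) < f (l j) := mem_lowerSet.mp (hlmem j)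
          have h2 : (l j' : Fin N) < f (l j') := mem_lowerSet.mp (hlmem j')
          have h4 : f (l j) = l j' := by rw [hc, h.1]
          rw [h4] at h1
          rw [← hc] at h2
          exact absurd (h1.trans h2) (lt_irrefl _)
        have hinj : Function.Injective l := l.injective
        apply Finite.injective_iff_bijective.mp
        intro a b hab
        simp only [] at hab
        have ha := a.isLt; have hb := b.isLt
        by_cases h1 : a.val % 2 = 0 <;> by_cases h2 : b.val % 2 = 0
        · rw [if_pos h1, if_pos h2] at hab
          have h3 := hinj hab
          rw [Fin.mk.injEq] at h3
          apply Fin.ext; omega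
        · rw [if_pos h1, if_neg h2] at hab
          exact absurd hab (hmix _ _)
        · rw [if_neg h1, if_pos h2] at hab
          exact absurd hab.symm (hmix _ _)
        · rw [if_neg h1, if_neg h2] at hab
          have h3 := hinj (f.injective hab)
          rw [Fin.mk.injEq] at h3
          apply Fin.ext; omega)
  else 1


lemma pperm_invol (hN : N % 2 = 0) (x : Fin N) : pperm hN (pperm hN x) = x := pfun_invol hN x

lemma exists_ev_od (hN : N % 2 = 0) (x : Fin N) :
    ∃ j : Fin (N / 2), x = ev j ∨ x = od j := by
  have hx := x.isLt
  refine ⟨⟨x.val / 2, by omega⟩, ?_⟩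
  by_cases h : x.val % 2 = 0
  · left; apply Fin.ext; show x.val = 2 * (x.val / 2); omega
  · right; apply Fin.ext; show x.val = 2 * (x.val / 2) + 1; omega

/-- the matching (pairing) associated with a permutation. -/
noncomputable def matchOf (hN : N % 2 = 0) (σ : Equiv.Perm (Fin N)) : Equiv.Perm (Fin N) :=
  σ * pperm hN * σ⁻¹

lemma matchOf_apply (hN : N % 2 = 0) (σ : Equiv.Perm (Fin N)) (x : Fin N) :
    matchOf hN σ x = σ (pperm hN (σ⁻¹ x)) := rfl

lemma matchOf_invol (hN : N % 2 = 0) (σ : Equiv.Perm (Fin N)) (x : Fin N) :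
    matchOf hN σ (matchOf hN σ x) = x := by
  simp only [matchOf_apply, Equiv.symm_apply_apply, Equiv.Perm.inv_apply_self]
  rw [pperm_invol]
  simp

lemma matchOf_ne (hN : N % 2 = 0) (σ : Equiv.Perm (Fin N)) (x : Fin N) :
    matchOf hN σ x ≠ x := by
  rw [matchOf_apply]
  intro hc
  have := congrArg (fun z => σ⁻¹ z) hc
  simp only [Equiv.Perm.inv_apply_self] at this
  exact pperm_ne hN (σ⁻¹ x) this

lemma matchOf_ev (hN : N % 2 = 0) (σ : Equiv.Perm (Fin N)) (j : Fin (N / 2)) :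
    matchOf hN σ (σ (ev j)) = σ (od j) := by
  rw [matchOf_apply]
  rw [Equiv.Perm.inv_apply_self, pperm_ev]

lemma matchOf_od (hN : N % 2 = 0) (σ : Equiv.Perm (Fin N)) (j : Fin (N / 2)) :
    matchOf hN σ (σ (od j)) = σ (ev j) := by
  rw [matchOf_apply]
  rw [Equiv.Perm.inv_apply_self, pperm_od]

section canonFAPI

variable {f : Equiv.Perm (Fin N)} (hN : N % 2 = 0)
  (hf1 : ∀ x, f (f x) = x) (hf2 : ∀ x, f x ≠ x)

include hf1 hf2

lemma canonF_apply (i : Fin N) :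
    canonF hN f i = if i.val % 2 = 0 then
      (lowerSet f).orderEmbOfFin (lowerSet_card f hf1 hf2) ⟨i.val / 2, by have := i.isLt; omega⟩
    else
      f ((lowerSet f).orderEmbOfFin (lowerSet_card f hf1 hf2)
        ⟨i.val / 2, by have := i.isLt; omega⟩) := by
  unfold canonF
  rw [dif_pos ⟨hf1, hf2⟩]
  rfl

lemma canonF_ev (j : Fin (N / 2)) :
    canonF hN f (ev j) = (lowerSet f).orderEmbOfFin (lowerSet_card f hf1 hf2) j := by
  rw [canonF_apply hN hf1 hf2, if_pos (show (ev j).val % 2 = 0 by show 2 * j.val % 2 = 0; omega)]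
  congr 1
  apply Fin.ext
  show (ev j).val / 2 = j.val
  show 2 * j.val / 2 = j.val
  omega

lemma canonF_od (j : Fin (N / 2)) :
    canonF hN f (od j) = f ((lowerSet f).orderEmbOfFin (lowerSet_card f hf1 hf2) j) := by
  rw [canonF_apply hN hf1 hf2,
    if_neg (show ¬(od j).val % 2 = 0 by show ¬(2 * j.val + 1) % 2 = 0; omega)]
  congr 2
  apply Fin.ext
  show (od j).val / 2 = j.val
  show (2 * j.val + 1) / 2 = j.val
  omega

lemma canonF_mem : canonF hN f ∈ filt N := by
  rw [mem_filt]
  constructor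
  · intro j
    rw [canonF_ev hN hf1 hf2, canonF_od hN hf1 hf2]
    exact mem_lowerSet.mp (Finset.orderEmbOfFin_mem _ _ j)
  · intro j k hjk
    rw [canonF_ev hN hf1 hf2, canonF_ev hN hf1 hf2]
    exact ((lowerSet f).orderEmbOfFin (lowerSet_card f hf1 hf2)).strictMono hjk

lemma matchOf_canonF : matchOf hN (canonF hN f) = f := by
  have key : ∀ y, canonF hN f (pperm hN y) = f (canonF hN f y) := by
    intro y
    obtain ⟨j, hj | hj⟩ := exists_ev_od hN y <;> subst hj
    · rw [pperm_ev, canonF_od hN hf1 hf2, canonF_ev hN hf1 hf2]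
    · rw [pperm_od, canonF_ev hN hf1 hf2, canonF_od hN hf1 hf2, hf1]
  apply Equiv.ext
  intro x
  rw [matchOf_apply]
  obtain ⟨y, rfl⟩ := (canonF hN f).surjective x
  rw [Equiv.Perm.inv_apply_self]
  exact key y

omit hf1 hf2 in
lemma canonF_eq_self {σ : Equiv.Perm (Fin N)} (hσ : σ ∈ filt N) :
    canonF hN (matchOf hN σ) = σ := by
  rw [mem_filt] at hσ
  have hf1' := matchOf_invol hN σ
  have hf2' := matchOf_ne hN σ
  have hmem : ∀ j, σ (ev j) ∈ lowerSet (matchOf hN σ) := by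
    intro j
    rw [mem_lowerSet, matchOf_ev hN σ j]
    exact hσ.1 j
  have hmono : StrictMono (fun j => σ (ev j)) := by
    intro a b hab
    exact hσ.2 a b hab
  have hl := Finset.orderEmbOfFin_unique
    (lowerSet_card (matchOf hN σ) hf1' hf2') hmem hmono
  apply Equiv.ext
  intro x
  obtain ⟨j, hj | hj⟩ := exists_ev_od hN x <;> subst hj
  · rw [canonF_ev hN hf1' hf2', ← congrFun hl j]
  · rw [canonF_od hN hf1' hf2', ← congrFun hl j, matchOf_ev]

end canonFAPI


/-! ### Signs of pairing-respecting permutations -/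

lemma ev_inj {j j' : Fin (N / 2)} (h : ev (N := N) j = ev j') : j = j' := by
  have := congrArg Fin.val h
  apply Fin.ext
  simp only [ev] at this
  omega

lemma ev_ne_od {j j' : Fin (N / 2)} : ev (N := N) j ≠ od j' := by
  intro h
  have := congrArg Fin.val h
  simp only [ev, od] at this
  omega

lemma od_ne_ev {j j' : Fin (N / 2)} : od (N := N) j ≠ ev j' := fun h => ev_ne_od h.symm

lemma od_inj {j j' : Fin (N / 2)} (h : od (N := N) j = od j') : j = j' := by
  have := congrArg Fin.val h
  apply Fin.ext
  simp only [od] at this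
  omega

/-- doubling of a permutation of the pairs. -/
noncomputable def dfun (hN : N % 2 = 0) (π : Equiv.Perm (Fin (N / 2))) (x : Fin N) : Fin N :=
  if x.val % 2 = 0 then ev (π ⟨x.val / 2, by have := x.isLt; omega⟩)
  else od (π ⟨x.val / 2, by have := x.isLt; omega⟩)

lemma dfun_ev (hN : N % 2 = 0) (π : Equiv.Perm (Fin (N / 2))) (j : Fin (N / 2)) :
    dfun hN π (ev j) = ev (π j) := by
  unfold dfun
  rw [if_pos (show (ev j).val % 2 = 0 from by show 2 * j.val % 2 = 0; omega)]
  congr 2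
  apply Fin.ext
  show 2 * j.val / 2 = j.val
  omega

lemma dfun_od (hN : N % 2 = 0) (π : Equiv.Perm (Fin (N / 2))) (j : Fin (N / 2)) :
    dfun hN π (od j) = od (π j) := by
  unfold dfun
  rw [if_neg (show ¬(od j).val % 2 = 0 from by show ¬(2 * j.val + 1) % 2 = 0; omega)]
  congr 2
  apply Fin.ext
  show (2 * j.val + 1) / 2 = j.val
  omega

/-- the doubled permutation. -/
noncomputable def Dperm (hN : N % 2 = 0) (π : Equiv.Perm (Fin (N / 2))) : Equiv.Perm (Fin N) where
  toFun := dfun hN π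
  invFun := dfun hN π⁻¹
  left_inv := by
    intro x
    obtain ⟨j, hj | hj⟩ := exists_ev_od hN x <;> subst hj
    · rw [dfun_ev, dfun_ev, Equiv.Perm.inv_apply_self]
    · rw [dfun_od, dfun_od, Equiv.Perm.inv_apply_self]
  right_inv := by
    intro x
    obtain ⟨j, hj | hj⟩ := exists_ev_od hN x <;> subst hj
    · rw [dfun_ev, dfun_ev, Equiv.Perm.apply_inv_self]
    · rw [dfun_od, dfun_od, Equiv.Perm.apply_inv_self]

lemma Dperm_ev (hN : N % 2 = 0) (π : Equiv.Perm (Fin (N / 2))) (j : Fin (N / 2)) :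
    Dperm hN π (ev j) = ev (π j) := dfun_ev hN π j

lemma Dperm_od (hN : N % 2 = 0) (π : Equiv.Perm (Fin (N / 2))) (j : Fin (N / 2)) :
    Dperm hN π (od j) = od (π j) := dfun_od hN π j

lemma Dperm_mul (hN : N % 2 = 0) (π ρ : Equiv.Perm (Fin (N / 2))) :
    Dperm hN (π * ρ) = Dperm hN π * Dperm hN ρ := by
  apply Equiv.ext
  intro x
  obtain ⟨j, hj | hj⟩ := exists_ev_od hN x <;> subst hj
  · simp only [Equiv.Perm.mul_apply, Dperm_ev]
  · simp only [Equiv.Perm.mul_apply, Dperm_od]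

lemma Dperm_swap (hN : N % 2 = 0) (a b : Fin (N / 2)) (hab : a ≠ b) :
    Dperm hN (Equiv.swap a b) = Equiv.swap (ev a) (ev b) * Equiv.swap (od a) (od b) := by
  apply Equiv.ext
  intro x
  obtain ⟨j, hj | hj⟩ := exists_ev_od hN x <;> subst hj
  · simp only [Equiv.Perm.mul_apply, Dperm_ev]
    rw [Equiv.swap_apply_of_ne_of_ne ev_ne_od ev_ne_od]
    by_cases h1 : j = a
    · subst h1; rw [Equiv.swap_apply_left, Equiv.swap_apply_left]
    · by_cases h2 : j = b
      · subst h2; rw [Equiv.swap_apply_right, Equiv.swap_apply_right]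
      · rw [Equiv.swap_apply_of_ne_of_ne h1 h2,
          Equiv.swap_apply_of_ne_of_ne (fun hc => h1 (ev_inj hc)) (fun hc => h2 (ev_inj hc))]
  · simp only [Equiv.Perm.mul_apply, Dperm_od]
    by_cases h1 : j = a
    · subst h1
      rw [Equiv.swap_apply_left, Equiv.swap_apply_left,
        Equiv.swap_apply_of_ne_of_ne od_ne_ev od_ne_ev]
    · by_cases h2 : j = b
      · subst h2
        rw [Equiv.swap_apply_right, Equiv.swap_apply_right,
          Equiv.swap_apply_of_ne_of_ne od_ne_ev od_ne_ev]
      · rw [Equiv.swap_apply_of_ne_of_ne h1 h2,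
          Equiv.swap_apply_of_ne_of_ne (fun hc => h1 (od_inj hc)) (fun hc => h2 (od_inj hc)),
          Equiv.swap_apply_of_ne_of_ne od_ne_ev od_ne_ev]

lemma sign_Dperm (hN : N % 2 = 0) (π : Equiv.Perm (Fin (N / 2))) :
    Equiv.Perm.sign (Dperm hN π) = 1 := by
  refine Equiv.Perm.swap_induction_on π ?_ ?_
  · have h : Dperm hN 1 = 1 := by
      apply Equiv.ext
      intro x
      obtain ⟨j, hj | hj⟩ := exists_ev_od hN x <;> subst hj
      · rw [Dperm_ev]; rfl
      · rw [Dperm_od]; rfl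
    rw [h, _root_.map_one]
  · intro f x y hxy ih
    rw [Dperm_mul, _root_.map_mul, ih, mul_one, Dperm_swap hN x y hxy, _root_.map_mul,
      Equiv.Perm.sign_swap (fun hc => hxy (ev_inj hc)),
      Equiv.Perm.sign_swap (fun hc => hxy (od_inj hc))]
    norm_num

/-- sign of a permutation only flipping within pairs. -/
lemma sign_flips (hN : N % 2 = 0) : ∀ (n : ℕ) (g : Equiv.Perm (Fin N)),
    (∀ x, g x = x ∨ g x = pperm hN x) →
    (Finset.univ.filter fun j : Fin (N / 2) => g (ev j) ≠ ev j).card = n →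
    Equiv.Perm.sign g = (-1 : ℤˣ) ^ n := by
  intro n
  induction n with
  | zero =>
    intro g hg hcard
    rw [Finset.card_eq_zero, Finset.filter_eq_empty_iff] at hcard
    have hid : g = 1 := by
      apply Equiv.ext
      intro x
      obtain ⟨j, hj | hj⟩ := exists_ev_od hN x <;> subst hj
      · have := hcard (Finset.mem_univ j)
        simpa using not_not.mp this
      · have hev : g (ev j) = ev j := by
          have := hcard (Finset.mem_univ j)
          simpa using not_not.mp this
        rcases hg (od j) with h | h
        · simpa using h
        · exfalso
          rw [pperm_od] at h
          have := g.injective (h.trans hev.symm)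
          exact od_ne_ev this
    rw [hid, _root_.map_one, pow_zero]
  | succ n ih =>
    intro g hg hcard
    have hne : (Finset.univ.filter fun j : Fin (N / 2) => g (ev j) ≠ ev j).Nonempty := by
      rw [← Finset.card_pos, hcard]; omega
    obtain ⟨j₀, hj₀⟩ := hne
    rw [Finset.mem_filter] at hj₀
    have hgee : g (ev j₀) = od j₀ := by
      rcases hg (ev j₀) with h | h
      · exact absurd h hj₀.2
      · rw [pperm_ev] at h; exact h
    have hgoo : g (od j₀) = ev j₀ := by
      rcases hg (od j₀) with h | h
      · exfalso
        have := g.injective (hgee.trans h.symm)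
        exact ev_ne_od this
      · rw [pperm_od] at h; exact h
    set g' := g * Equiv.swap (ev j₀) (od j₀) with hg'def
    have hg'ev : g' (ev j₀) = ev j₀ := by
      rw [hg'def, Equiv.Perm.mul_apply, Equiv.swap_apply_left, hgoo]
    have hg'od : g' (od j₀) = od j₀ := by
      rw [hg'def, Equiv.Perm.mul_apply, Equiv.swap_apply_right, hgee]
    have hg'other : ∀ x, x ≠ ev j₀ → x ≠ od j₀ → g' x = g x := by
      intro x h1 h2
      rw [hg'def, Equiv.Perm.mul_apply, Equiv.swap_apply_of_ne_of_ne h1 h2]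
    have hg' : ∀ x, g' x = x ∨ g' x = pperm hN x := by
      intro x
      by_cases h1 : x = ev j₀
      · subst h1; left; exact hg'ev
      · by_cases h2 : x = od j₀
        · subst h2; left; exact hg'od
        · rw [hg'other x h1 h2]; exact hg x
    have hcard' : (Finset.univ.filter fun j : Fin (N / 2) => g' (ev j) ≠ ev j).card = n := by
      have hset : (Finset.univ.filter fun j : Fin (N / 2) => g' (ev j) ≠ ev j)
          = (Finset.univ.filter fun j : Fin (N / 2) => g (ev j) ≠ ev j).erase j₀ := by
        ext j
        rw [Finset.mem_erase, Finset.mem_filter, Finset.mem_filter]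
        constructor
        · intro ⟨_, hj⟩
          have hjne : j ≠ j₀ := by
            intro hc; subst hc; exact hj hg'ev
          rw [hg'other (ev j) (fun hc => hjne (ev_inj hc)) ev_ne_od] at hj
          exact ⟨hjne, Finset.mem_univ j, hj⟩
        · intro ⟨hjne, _, hj⟩
          refine ⟨Finset.mem_univ j, ?_⟩
          rw [hg'other (ev j) (fun hc => hjne (ev_inj hc)) ev_ne_od]
          exact hj
      rw [hset, Finset.card_erase_of_mem (by rw [Finset.mem_filter]; exact hj₀), hcard]
      omega
    have hsg' := ih g' hg' hcard'
    have hsplit : Equiv.Perm.sign g' = Equiv.Perm.sign g * (-1 : ℤˣ) := by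
      rw [hg'def, _root_.map_mul, Equiv.Perm.sign_swap ev_ne_od]
    rw [hsplit] at hsg'
    have hfin := congrArg (fun u => u * (-1 : ℤˣ)) hsg'
    simp only [mul_assoc] at hfin
    norm_num at hfin
    rw [hfin, pow_succ, mul_neg_one]

lemma ev_val {j : Fin (N / 2)} : (ev (N := N) j).val = 2 * j.val := rfl
lemma od_val {j : Fin (N / 2)} : (od (N := N) j).val = 2 * j.val + 1 := rfl

section pcomm

variable (hN : N % 2 = 0) (h : Equiv.Perm (Fin N))
  (hcomm : ∀ x, h (pperm hN x) = pperm hN (h x))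

/-- the permutation induced on pairs. -/
private noncomputable def pif : Fin (N / 2) → Fin (N / 2) :=
  fun j => ⟨(h (ev j)).val / 2, by have := (h (ev j)).isLt; omega⟩

include hcomm

lemma h_od_eq : ∀ j, h (od j) = pperm hN (h (ev j)) := by
  intro j; rw [← pperm_ev hN j, hcomm]

lemma pif_even : ∀ j, (h (ev j)).val % 2 = 0 →
    h (ev j) = ev (pif hN h j) ∧ h (od j) = od (pif hN h j) := by
  intro j hp
  have h1 : h (ev j) = ev (pif hN h j) := by
    apply Fin.ext
    show (h (ev j)).val = 2 * ((h (ev j)).val / 2)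
    omega
  refine ⟨h1, ?_⟩
  rw [h_od_eq hN h hcomm j, h1, pperm_ev]

lemma pif_odd : ∀ j, (h (ev j)).val % 2 = 1 →
    h (ev j) = od (pif hN h j) ∧ h (od j) = ev (pif hN h j) := by
  intro j hp
  have h1 : h (ev j) = od (pif hN h j) := by
    apply Fin.ext
    show (h (ev j)).val = 2 * ((h (ev j)).val / 2) + 1
    omega
  refine ⟨h1, ?_⟩
  rw [h_od_eq hN h hcomm j, h1, pperm_od]

lemma pif_inj : Function.Injective (pif hN h) := by
  intro a b hab
  by_cases pa : (h (ev a)).val % 2 = 0 <;> by_cases pb : (h (ev b)).val % 2 = 0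
  · have := (pif_even hN h hcomm a pa).1.trans
      ((congrArg ev hab).trans (pif_even hN h hcomm b pb).1.symm)
    exact ev_inj (h.injective this)
  · exfalso
    have hb1 := (pif_odd hN h hcomm b (by omega)).2
    rw [← hab] at hb1
    have := (pif_even hN h hcomm a pa).1.trans hb1.symm
    exact od_ne_ev (h.injective this).symm
  · exfalso
    have ha1 := (pif_odd hN h hcomm a (by omega)).2
    rw [hab] at ha1
    have := (pif_even hN h hcomm b pb).1.trans ha1.symm
    exact od_ne_ev (h.injective this).symm
  · have := (pif_odd hN h hcomm a (by omega)).1.trans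
      ((congrArg od hab).trans (pif_odd hN h hcomm b (by omega)).1.symm)
    exact ev_inj (h.injective this)

/-- the induced pair permutation as an `Equiv`. -/
private noncomputable def piE : Equiv.Perm (Fin (N / 2)) :=
  Equiv.ofBijective (pif hN h) (Finite.injective_iff_bijective.mp (pif_inj hN h hcomm))

lemma piE_apply (j : Fin (N / 2)) : piE hN h hcomm j = pif hN h j := rfl

lemma sign_pcomm :
    Equiv.Perm.sign h =
      (-1 : ℤˣ) ^ (Finset.univ.filter fun j : Fin (N / 2) => (h (ev j)).val % 2 = 1).card := by
  set π := piE hN h hcomm with hπdef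
  set g := h * (Dperm hN π)⁻¹ with hgdef
  have hDinv_ev : ∀ j, (Dperm hN π)⁻¹ (ev j) = ev (π⁻¹ j) := by
    intro j
    apply (Dperm hN π).injective
    rw [Equiv.Perm.apply_inv_self, Dperm_ev, Equiv.Perm.apply_inv_self]
  have hDinv_od : ∀ j, (Dperm hN π)⁻¹ (od j) = od (π⁻¹ j) := by
    intro j
    apply (Dperm hN π).injective
    rw [Equiv.Perm.apply_inv_self, Dperm_od, Equiv.Perm.apply_inv_self]
  have hπinv : ∀ j, pif hN h (π⁻¹ j) = j := by
    intro j
    have := Equiv.Perm.apply_inv_self π j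
    rwa [hπdef, piE_apply] at this
  have hg : ∀ x, g x = x ∨ g x = pperm hN x := by
    intro x
    obtain ⟨j, hj | hj⟩ := exists_ev_od hN x <;> subst hj
    · rw [hgdef, Equiv.Perm.mul_apply, hDinv_ev]
      by_cases hp : (h (ev (π⁻¹ j))).val % 2 = 0
      · left
        rw [(pif_even hN h hcomm _ hp).1, hπinv]
      · right
        rw [(pif_odd hN h hcomm _ (by omega)).1, hπinv, pperm_ev]
    · rw [hgdef, Equiv.Perm.mul_apply, hDinv_od]
      by_cases hp : (h (ev (π⁻¹ j))).val % 2 = 0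
      · left
        rw [(pif_even hN h hcomm _ hp).2, hπinv]
      · right
        rw [(pif_odd hN h hcomm _ (by omega)).2, hπinv, pperm_od]
  have hcards : (Finset.univ.filter fun j : Fin (N / 2) => g (ev j) ≠ ev j).card
      = (Finset.univ.filter fun j : Fin (N / 2) => (h (ev j)).val % 2 = 1).card := by
    apply Finset.card_bij (fun j _ => π⁻¹ j)
    · intro a ha
      rw [Finset.mem_filter] at ha ⊢
      refine ⟨Finset.mem_univ _, ?_⟩
      by_contra hodd
      have hp : (h (ev (π⁻¹ a))).val % 2 = 0 := by omega
      apply ha.2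
      rw [hgdef, Equiv.Perm.mul_apply, hDinv_ev, (pif_even hN h hcomm _ hp).1, hπinv]
    · intro a _ b _ hab
      exact π⁻¹.injective hab
    · intro b hb
      rw [Finset.mem_filter] at hb
      refine ⟨π b, Finset.mem_filter.mpr ⟨Finset.mem_univ _, ?_⟩, by simp⟩
      rw [hgdef, Equiv.Perm.mul_apply, hDinv_ev, Equiv.Perm.inv_apply_self,
        (pif_odd hN h hcomm _ hb.2).1]
      exact od_ne_ev
  have hsg := sign_flips hN _ g hg rfl
  rw [hcards] at hsg
  have hh : g * Dperm hN π = h := by rw [hgdef, inv_mul_cancel_right]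
  conv_lhs => rw [← hh]
  rw [_root_.map_mul, sign_Dperm, mul_one, hsg]

lemma term_mul_pcomm (A : Matrix (Fin N) (Fin N) ℂ) (hA : Aᵀ = -A) (σ : Equiv.Perm (Fin N)) :
    term A (σ * h) = term A σ := by
  have hskew : ∀ x y, A y x = -A x y := by
    intro x y
    have := congrFun (congrFun hA x) y
    rw [Matrix.transpose_apply, Matrix.neg_apply] at this
    exact this
  set π := piE hN h hcomm with hπdef
  set c := (Finset.univ.filter fun j : Fin (N / 2) => (h (ev j)).val % 2 = 1).card with hc
  have hfactor : ∀ j : Fin (N / 2), A ((σ * h) (ev j)) ((σ * h) (od j)) =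
      (if (h (ev j)).val % 2 = 1 then (-1 : ℂ) else 1) * A (σ (ev (π j))) (σ (od (π j))) := by
    intro j
    rw [Equiv.Perm.mul_apply, Equiv.Perm.mul_apply]
    by_cases hp : (h (ev j)).val % 2 = 1
    · rw [if_pos hp, (pif_odd hN h hcomm j hp).1, (pif_odd hN h hcomm j hp).2, hπdef, piE_apply,
        hskew]
      ring
    · rw [if_neg hp, (pif_even hN h hcomm j (by omega)).1,
        (pif_even hN h hcomm j (by omega)).2, hπdef, piE_apply, one_mul]
  unfold term
  rw [Finset.prod_congr rfl (fun j _ => hfactor j), Finset.prod_mul_distrib,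
    Finset.prod_ite (fun _ => (-1 : ℂ)) (fun _ => (1 : ℂ)), Finset.prod_const,
    Finset.prod_const_one, mul_one, Equiv.prod_comp π (fun r => A (σ (ev r)) (σ (od r)))]
  have hsign : (((Equiv.Perm.sign (σ * h) : ℤˣ) : ℤ) : ℂ)
      = ((Equiv.Perm.sign σ : ℤ) : ℂ) * (-1) ^ c := by
    rw [_root_.map_mul, sign_pcomm hN h hcomm, ← hc]
    push_cast
    ring
  rw [hsign, hc]
  have hsq : ((-1 : ℂ) ^ c) * (-1) ^ c = 1 := by
    rw [← mul_pow]; norm_num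
  rw [← hc]
  calc ((Equiv.Perm.sign σ : ℤ) : ℂ) * (-1) ^ c *
        ((-1) ^ c * ∏ r : Fin (N / 2), A (σ (ev r)) (σ (od r)))
      = ((Equiv.Perm.sign σ : ℤ) : ℂ) * (((-1 : ℂ) ^ c * (-1) ^ c)
          * ∏ r : Fin (N / 2), A (σ (ev r)) (σ (od r))) := by ring
    _ = _ := by rw [hsq, one_mul]

end pcomm

lemma term_eq_of_matchOf_eq (hN : N % 2 = 0) (A : Matrix (Fin N) (Fin N) ℂ) (hA : Aᵀ = -A)
    {σ τ : Equiv.Perm (Fin N)} (hm : matchOf hN σ = matchOf hN τ) : term A σ = term A τ := by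
  have hcomm' : (σ⁻¹ * τ) * pperm hN = pperm hN * (σ⁻¹ * τ) := by
    have h1 : σ * pperm hN * σ⁻¹ = τ * pperm hN * τ⁻¹ := hm
    calc (σ⁻¹ * τ) * pperm hN = σ⁻¹ * (τ * pperm hN * τ⁻¹) * τ := by group
      _ = σ⁻¹ * (σ * pperm hN * σ⁻¹) * τ := by rw [h1]
      _ = pperm hN * (σ⁻¹ * τ) := by group
  have hcomm : ∀ x, (σ⁻¹ * τ) (pperm hN x) = pperm hN ((σ⁻¹ * τ) x) := by
    intro x
    have := congrArg (fun p => p x) hcomm'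
    simpa using this
  have hστ : σ * (σ⁻¹ * τ) = τ := by group
  rw [← hστ, term_mul_pcomm hN (σ⁻¹ * τ) hcomm A hA σ]


/-! ### pf vanishes when two rows coincide -/

lemma matchOf_mul_left (hN : N % 2 = 0) (τ σ : Equiv.Perm (Fin N)) :
    matchOf hN (τ * σ) = τ * matchOf hN σ * τ⁻¹ := by
  unfold matchOf; group

/-- canonicalization of a permutation. -/
noncomputable def canon (hN : N % 2 = 0) (σ : Equiv.Perm (Fin N)) : Equiv.Perm (Fin N) :=
  canonF hN (matchOf hN σ)

lemma canon_mem (hN : N % 2 = 0) (σ : Equiv.Perm (Fin N)) : canon hN σ ∈ filt N :=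
  canonF_mem hN (matchOf_invol hN σ) (matchOf_ne hN σ)

lemma matchOf_canon (hN : N % 2 = 0) (σ : Equiv.Perm (Fin N)) :
    matchOf hN (canon hN σ) = matchOf hN σ :=
  matchOf_canonF hN (matchOf_invol hN σ) (matchOf_ne hN σ)

lemma term_canon (hN : N % 2 = 0) (A : Matrix (Fin N) (Fin N) ℂ) (hA : Aᵀ = -A)
    (σ : Equiv.Perm (Fin N)) : term A (canon hN σ) = term A σ :=
  term_eq_of_matchOf_eq hN A hA (matchOf_canon hN σ)

lemma canon_eq_self' (hN : N % 2 = 0) {σ : Equiv.Perm (Fin N)} (h : σ ∈ filt N) :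
    canon hN σ = σ := canonF_eq_self hN h

lemma pf_eq_zero_of_rows_eq (hN : N % 2 = 0) (A : Matrix (Fin N) (Fin N) ℂ) (hA : Aᵀ = -A)
    (q r : Fin N) (hqr : q ≠ r) (hrow : ∀ y, A q y = A r y) : pf A = 0 := by
  have hskew : ∀ x y, A y x = -A x y := by
    intro x y
    have := congrFun (congrFun hA x) y
    rw [Matrix.transpose_apply, Matrix.neg_apply] at this
    exact this
  have hswap1 : ∀ x z, A (Equiv.swap q r x) z = A x z := by
    intro x z
    by_cases hx : x = q
    · subst hx; rw [Equiv.swap_apply_left, ← hrow]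
    · by_cases hx2 : x = r
      · subst hx2; rw [Equiv.swap_apply_right, hrow]
      · rw [Equiv.swap_apply_of_ne_of_ne hx hx2]
  have hswap : ∀ x z, A (Equiv.swap q r x) (Equiv.swap q r z) = A x z := by
    intro x z
    rw [hswap1]
    rw [hskew, hswap1, ← hskew]
  have hterm : ∀ σ, term A (Equiv.swap q r * σ) = -term A σ := by
    intro σ
    unfold term
    simp only [Equiv.Perm.mul_apply]
    rw [Finset.prod_congr rfl (fun j _ => hswap (σ (ev j)) (σ (od j))),
      _root_.map_mul, Equiv.Perm.sign_swap hqr]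
    push_cast
    ring
  have htermc : ∀ σ, term A (canon hN (Equiv.swap q r * σ)) = -term A σ := by
    intro σ
    rw [term_canon hN A hA, hterm]
  rw [pf_eq]
  apply Finset.sum_involution (g := fun σ _ => canon hN (Equiv.swap q r * σ))
  · intro σ _
    rw [htermc]
    ring
  · intro σ _ hfne hc
    apply hfne
    have := htermc σ
    rw [hc] at this
    have h2 : (2 : ℂ) * term A σ = 0 := by rw [two_mul]; linear_combination this
    simpa using h2
  · intro σ _
    exact canon_mem hN _
  · intro σ hσ
    have hmm : matchOf hN (Equiv.swap q r * canon hN (Equiv.swap q r * σ)) = matchOf hN σ := by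
      rw [matchOf_mul_left, matchOf_canon, matchOf_mul_left]
      have hss : Equiv.swap q r * Equiv.swap q r = 1 := Equiv.swap_mul_self q r
      rw [Equiv.swap_inv]
      calc Equiv.swap q r * (Equiv.swap q r * matchOf hN σ * Equiv.swap q r) * Equiv.swap q r
          = (Equiv.swap q r * Equiv.swap q r) * matchOf hN σ
            * (Equiv.swap q r * Equiv.swap q r) := by group
        _ = matchOf hN σ := by rw [hss, one_mul, mul_one]
    show canonF hN (matchOf hN _) = σ
    rw [hmm]
    exact canon_eq_self' hN hσ


/-! ### pf as an alternating function of the rows -/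

lemma gram_entry {k : ℕ} (A : Matrix (Fin (2 * k)) (Fin (2 * k)) ℂ)
    (v : Fin (2 * k) → Fin (2 * k) → ℂ) (x y : Fin (2 * k)) :
    (Matrix.of v * A * (Matrix.of v)ᵀ) x y = ∑ b, (∑ a, v x a * A a b) * v y b := by
  rw [Matrix.mul_apply]
  apply Finset.sum_congr rfl
  intro b _
  rw [Matrix.mul_apply, Matrix.transpose_apply]
  rfl

lemma prod_gram_update {k : ℕ} [DecidableEq (Fin (2 * k))]
    (A : Matrix (Fin (2 * k)) (Fin (2 * k)) ℂ)
    (σ : Equiv.Perm (Fin (2 * k))) (v : Fin (2 * k) → Fin (2 * k) → ℂ) (i : Fin (2 * k)) :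
    ∃ L : (Fin (2 * k) → ℂ) → ℂ,
      (∀ w1 w2, L (w1 + w2) = L w1 + L w2) ∧ (∀ (s : ℂ) (w), L (s • w) = s * L w) ∧
      (∀ w, ∏ j : Fin (2 * k / 2),
          (Matrix.of (Function.update v i w) * A * (Matrix.of (Function.update v i w))ᵀ)
            (σ (ev j)) (σ (od j)) = L w) := by
  have hne : ∀ (j : Fin (2 * k / 2)) (x : Fin (2 * k)), σ x = i → x ≠ ev j → x ≠ od j →
      σ (ev j) ≠ i ∧ σ (od j) ≠ i := by
    intro j x hx h1 h2
    constructor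
    · intro hc
      exact h1 (σ.injective (hx ▸ hc)).symm
    · intro hc
      exact h2 (σ.injective (hx ▸ hc)).symm
  obtain ⟨j₀, hj₀ | hj₀⟩ := exists_ev_od (two_mul_mod k) (σ⁻¹ i)
  · -- i is at the even slot of pair j₀
    have hi : σ (ev j₀) = i := by rw [← hj₀, Equiv.Perm.apply_inv_self]
    have hodne : σ (od j₀) ≠ i := by
      intro hc
      have : od j₀ = ev j₀ := σ.injective (by rw [hc, hi])
      exact od_ne_ev this
    refine ⟨fun w => (∑ b, (∑ a, w a * A a b) * v (σ (od j₀)) b) *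
      ∏ j ∈ Finset.univ.erase j₀,
        (Matrix.of v * A * (Matrix.of v)ᵀ) (σ (ev j)) (σ (od j)), ?_, ?_, ?_⟩
    · intro w1 w2
      simp only [Pi.add_apply, add_mul, Finset.sum_add_distrib]
      try ring
    · intro s w
      simp only [Pi.smul_apply, smul_eq_mul, mul_assoc, ← Finset.mul_sum]
      try ring
    · intro w
      rw [← Finset.mul_prod_erase _ _ (Finset.mem_univ j₀)]
      congr 1
      · rw [gram_entry, hi]
        apply Finset.sum_congr rfl
        intro b _
        rw [Function.update_self, Function.update_of_ne hodne]
      · apply Finset.prod_congr rfl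
        intro j hj
        have hjne : j ≠ j₀ := (Finset.mem_erase.mp hj).1
        obtain ⟨hn1, hn2⟩ := hne j (ev j₀) hi (fun hc => hjne (ev_inj hc).symm) ev_ne_od
        rw [gram_entry, gram_entry]
        apply Finset.sum_congr rfl
        intro b _
        rw [Function.update_of_ne hn2]
        congr 1
        apply Finset.sum_congr rfl
        intro a _
        rw [Function.update_of_ne hn1]
  · -- i is at the odd slot of pair j₀
    have hi : σ (od j₀) = i := by rw [← hj₀, Equiv.Perm.apply_inv_self]
    have hevne : σ (ev j₀) ≠ i := by
      intro hc
      have : ev j₀ = od j₀ := σ.injective (by rw [hc, hi])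
      exact ev_ne_od this
    refine ⟨fun w => (∑ b, (∑ a, v (σ (ev j₀)) a * A a b) * w b) *
      ∏ j ∈ Finset.univ.erase j₀,
        (Matrix.of v * A * (Matrix.of v)ᵀ) (σ (ev j)) (σ (od j)), ?_, ?_, ?_⟩
    · intro w1 w2
      simp only [Pi.add_apply, mul_add, Finset.sum_add_distrib]
      try ring
    · intro s w
      have hkey : (∑ b, (∑ a, v (σ (ev j₀)) a * A a b) * (s • w) b)
          = s * ∑ b, (∑ a, v (σ (ev j₀)) a * A a b) * w b := by
        rw [Finset.mul_sum]
        apply Finset.sum_congr rfl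
        intro b _
        simp only [Pi.smul_apply, smul_eq_mul]
        ring
      simp only []
      rw [hkey]
      ring
    · intro w
      rw [← Finset.mul_prod_erase _ _ (Finset.mem_univ j₀)]
      congr 1
      · rw [gram_entry, hi]
        apply Finset.sum_congr rfl
        intro b _
        rw [Function.update_self, Function.update_of_ne hevne]
      · apply Finset.prod_congr rfl
        intro j hj
        have hjne : j ≠ j₀ := (Finset.mem_erase.mp hj).1
        obtain ⟨hn1, hn2⟩ := hne j (od j₀) hi od_ne_ev (fun hc => hjne (od_inj hc).symm)
        rw [gram_entry, gram_entry]
        apply Finset.sum_congr rfl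
        intro b _
        rw [Function.update_of_ne hn2]
        congr 1
        apply Finset.sum_congr rfl
        intro a _
        rw [Function.update_of_ne hn1]

/-- pf of `of v * A * (of v)ᵀ` as a multilinear map in `v`. -/
noncomputable def pfML (k : ℕ) (A : Matrix (Fin (2 * k)) (Fin (2 * k)) ℂ) :
    MultilinearMap ℂ (fun _ : Fin (2 * k) => (Fin (2 * k) → ℂ)) ℂ where
  toFun v := pf (Matrix.of v * A * (Matrix.of v)ᵀ)
  map_update_add' v i w1 w2 := by
    show pf _ = pf _ + pf _
    rw [pf_eq, pf_eq, pf_eq, ← Finset.sum_add_distrib]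
    apply Finset.sum_congr rfl
    intro σ _
    obtain ⟨L, hLa, _, hL⟩ := prod_gram_update A σ v i
    unfold term
    rw [hL, hL, hL, hLa]
    ring
  map_update_smul' v i c w := by
    show pf _ = c • pf _
    rw [pf_eq, pf_eq, Finset.smul_sum]
    apply Finset.sum_congr rfl
    intro σ _
    obtain ⟨L, _, hLs, hL⟩ := prod_gram_update A σ v i
    unfold term
    rw [hL, hL, hLs, smul_eq_mul]
    ring

lemma pfML_rows_eq_zero (k : ℕ) (v : Fin (2 * k) → Fin (2 * k) → ℂ) (q r : Fin (2 * k))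
    (hv : v q = v r) (hqr : q ≠ r) : pf (Matrix.of v * Jmat k * (Matrix.of v)ᵀ) = 0 := by
  have hskew : (Matrix.of v * Jmat k * (Matrix.of v)ᵀ)ᵀ
      = -(Matrix.of v * Jmat k * (Matrix.of v)ᵀ) := by
    have h1 : (Matrix.of v * Jmat k * (Matrix.of v)ᵀ)ᵀ
        = Matrix.of v * (Jmat k)ᵀ * (Matrix.of v)ᵀ := by
      rw [Matrix.transpose_mul, Matrix.transpose_mul, Matrix.transpose_transpose,
        Matrix.mul_assoc]
    rw [h1, Jmat_transpose, Matrix.mul_neg, Matrix.neg_mul]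
  apply pf_eq_zero_of_rows_eq (two_mul_mod k) _ hskew q r hqr
  intro y
  rw [gram_entry, gram_entry, hv]

/-- pf of `of v * J * (of v)ᵀ` as an alternating map in `v`. -/
noncomputable def pfAlt (k : ℕ) : (Fin (2 * k) → ℂ) [⋀^Fin (2 * k)]→ₗ[ℂ] ℂ where
  toMultilinearMap := pfML k (Jmat k)
  map_eq_zero_of_eq' v q r hv hqr := pfML_rows_eq_zero k v q r hv hqr

lemma pfAlt_apply (k : ℕ) (v : Fin (2 * k) → Fin (2 * k) → ℂ) :
    pfAlt k v = pf (Matrix.of v * Jmat k * (Matrix.of v)ᵀ) := rfl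

lemma pf_congruence {k : ℕ} (P : Matrix (Fin (2 * k)) (Fin (2 * k)) ℂ) :
    pf (P * Jmat k * Pᵀ) = P.det * pf (Jmat k) := by
  have h := (pfAlt k).eq_smul_basis_det (Pi.basisFun ℂ (Fin (2 * k)))
  have h2 := DFunLike.congr_fun h (fun i => P i)
  rw [pfAlt_apply, AlternatingMap.smul_apply, pfAlt_apply, Pi.basisFun_det] at h2
  have hb : Matrix.of (fun i => (Pi.basisFun ℂ (Fin (2 * k))) i) = (1 : Matrix _ _ ℂ) := by
    ext a b
    simp [Matrix.one_apply, Pi.single_apply, eq_comm]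
  rw [hb] at h2
  have hP : Matrix.of (fun i => P i) = P := rfl
  rw [hP] at h2
  rw [Matrix.one_mul, Matrix.transpose_one, Matrix.mul_one] at h2
  rw [h2]
  show pf (Jmat k) • Matrix.detRowAlternating P = P.det * pf (Jmat k)
  rw [smul_eq_mul]
  rw [show Matrix.detRowAlternating P = P.det from rfl]
  ring


/-! ### Main positivity result -/

lemma Jmat_real {k : ℕ} : (Jmat k).map star = Jmat k := by
  ext i j
  rw [Matrix.map_apply]
  unfold Jmat
  split_ifs <;> simp

lemma Jmat_conjTranspose {k : ℕ} : (Jmat k)ᴴ = (Jmat k)ᵀ := by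
  rw [Matrix.conjTranspose, Matrix.transpose_map, Jmat_real]

lemma Jmat_T_mul_J {k : ℕ} : (Jmat k)ᵀ * Jmat k = 1 := by
  rw [Jmat_transpose, Matrix.neg_mul, Jmat_mul_Jmat, neg_neg]

lemma Jmat_mul_T {k : ℕ} : Jmat k * (Jmat k)ᵀ = 1 := by
  rw [Jmat_transpose, Matrix.mul_neg, Jmat_mul_Jmat, neg_neg]

open scoped MatrixOrder in
theorem pf_nonneg_main {k : ℕ} (B : Matrix (Fin (2 * k)) (Fin (2 * k)) ℂ)
    (hB : Bᵀ = -B) (h : ((-(Jmat k)) * B).PosSemidef) : 0 ≤ pf B := by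
  set A := (-(Jmat k)) * B with hAdef
  have hJA : Jmat k * A = B := by
    rw [hAdef, ← Matrix.mul_assoc, Matrix.mul_neg, Jmat_mul_Jmat, neg_neg, Matrix.one_mul]
  have hAT : Aᵀ = Jmat k * A * (Jmat k)ᵀ := by
    have h1 : Aᵀ = B * (Jmat k)ᵀ := by
      rw [hAdef, Matrix.transpose_mul, Matrix.transpose_neg, hB, Matrix.neg_mul,
        Matrix.mul_neg, neg_neg]
    have h2 : Jmat k * A * (Jmat k)ᵀ = B * (Jmat k)ᵀ := by rw [hJA]
    rw [h1, h2]
  set C := CFC.sqrt A with hCdef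
  have hCpsd : C.PosSemidef := Matrix.nonneg_iff_posSemidef.mp (CFC.sqrt_nonneg A)
  have hCsq : C * C = A := CFC.sqrt_mul_sqrt_self A (Matrix.nonneg_iff_posSemidef.mpr h)
  -- the conjugated square root
  set M := Jmat k * Cᵀ * (Jmat k)ᵀ with hMdef
  have hMpsd : M.PosSemidef := by
    rw [hMdef, ← Jmat_conjTranspose]
    exact hCpsd.transpose.mul_mul_conjTranspose_same (Jmat k)
  have hMsq : M ^ 2 = A := by
    rw [pow_two, hMdef]
    calc Jmat k * Cᵀ * (Jmat k)ᵀ * (Jmat k * Cᵀ * (Jmat k)ᵀ)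
        = Jmat k * (Cᵀ * ((Jmat k)ᵀ * Jmat k) * Cᵀ) * (Jmat k)ᵀ := by
          simp only [Matrix.mul_assoc]
      _ = Jmat k * (Cᵀ * Cᵀ) * (Jmat k)ᵀ := by rw [Jmat_T_mul_J, Matrix.mul_one]
      _ = Jmat k * (C * C)ᵀ * (Jmat k)ᵀ := by rw [Matrix.transpose_mul]
      _ = Jmat k * Aᵀ * (Jmat k)ᵀ := by rw [hCsq]
      _ = Jmat k * (Jmat k * A * (Jmat k)ᵀ) * (Jmat k)ᵀ := by rw [hAT]
      _ = (Jmat k * Jmat k) * A * ((Jmat k)ᵀ * (Jmat k)ᵀ) := by simp only [Matrix.mul_assoc]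
      _ = A := by
          rw [Jmat_mul_Jmat, Jmat_transpose]
          simp [Matrix.neg_mul, Matrix.mul_neg, Jmat_mul_Jmat]
  have hMC : M = C := by
    rw [hCdef]
    exact (CFC.sqrt_unique (by rw [← pow_two]; exact hMsq)
      (Matrix.nonneg_iff_posSemidef.mpr hMpsd)).symm
  -- B = Cᵀ * J * C  and  Cᵀᵀ = C
  have hCT : Cᵀ * Jmat k * (Cᵀ)ᵀ = B := by
    rw [Matrix.transpose_transpose]
    have h1 : Cᵀ = Jmat k * C * (Jmat k)ᵀ := by
      have := congrArg Matrix.transpose hMC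
      rw [hMdef] at this
      rw [← this, Matrix.transpose_mul, Matrix.transpose_mul, Matrix.transpose_transpose,
        Matrix.transpose_transpose, Matrix.mul_assoc]
    calc Cᵀ * Jmat k * C = Jmat k * C * ((Jmat k)ᵀ * Jmat k) * C := by
          rw [h1]; simp only [Matrix.mul_assoc]
      _ = Jmat k * (C * C) := by rw [Jmat_T_mul_J, Matrix.mul_one, Matrix.mul_assoc]
      _ = B := by rw [hCsq, hJA]
  have hpf : pf B = Cᵀ.det := by
    rw [← hCT, pf_congruence, pf_J, mul_one]
  have hdet : C.det = ((∏ i, hCpsd.1.eigenvalues i : ℝ) : ℂ) := by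
    rw [hCpsd.1.det_eq_prod_eigenvalues]
    push_cast
    rfl
  rw [hpf, Matrix.det_transpose, hdet]
  rw [Complex.zero_le_real]
  apply Finset.prod_nonneg
  intro i _
  exact hCpsd.eigenvalues_nonneg i


/-! ### Submatrix reduction -/

lemma emb_val' {m k : ℕ} (t : Fin k → Fin m) (x : Fin (2 * k)) (hlt : x.val / 2 < k) :
    (emb t x).val = 2 * (t ⟨x.val / 2, hlt⟩).val + x.val % 2 := rfl

lemma emb_pp {m k : ℕ} (t : Fin k → Fin m) (i : Fin (2 * k)) :
    emb t (pp k i) = pp m (emb t i) := by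
  have hi := i.isLt
  have hppi := (pp k i).isLt
  have hlt1 : i.val / 2 < k := by omega
  have hlt2 : (pp k i).val / 2 < k := by omega
  have hv1 := pp_val i
  have he1 := emb_val' t i hlt1
  have he2 := emb_val' t (pp k i) hlt2
  have harg : (pp k i).val / 2 = i.val / 2 := by
    by_cases hp : i.val % 2 = 0
    · rw [if_pos hp] at hv1; omega
    · rw [if_neg hp] at hv1; omega
  have harg' : (⟨(pp k i).val / 2, hlt2⟩ : Fin k) = ⟨i.val / 2, hlt1⟩ := Fin.ext harg
  rw [harg'] at he2
  apply Fin.ext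
  have hv2 := pp_val (emb t i)
  by_cases hp : i.val % 2 = 0
  · rw [if_pos hp] at hv1
    have hpar : (emb t i).val % 2 = 0 := by rw [he1]; omega
    rw [if_pos hpar] at hv2
    omega
  · rw [if_neg hp] at hv1
    have hpar : ¬(emb t i).val % 2 = 0 := by rw [he1]; omega
    rw [if_neg hpar] at hv2
    omega

lemma Jmul_submatrix {m k : ℕ} (t : Fin k → Fin m) (B : Matrix (Fin (2 * m)) (Fin (2 * m)) ℂ) :
    Jmat k * blockSub B t = (Jmat m * B).submatrix (emb t) (emb t) := by
  ext i j
  rw [Jmul_apply, Matrix.submatrix_apply, Jmul_apply]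
  have hi := i.isLt
  have hpar : (emb t i).val % 2 = i.val % 2 := by
    rw [emb_val' t i (by omega)]; omega
  rw [hpar]
  unfold blockSub
  rw [Matrix.submatrix_apply, emb_pp]

theorem pf_nonneg_sub {m k : ℕ} (B : Matrix (Fin (2 * m)) (Fin (2 * m)) ℂ)
    (hB : Bᵀ = -B) (h : ((-(Jmat m)) * B).PosSemidef) (t : Fin k → Fin m) :
    0 ≤ pf (blockSub B t) := by
  apply pf_nonneg_main
  · show (B.submatrix (emb t) (emb t))ᵀ = -(B.submatrix (emb t) (emb t))
    rw [Matrix.transpose_submatrix, hB]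
    rfl
  · have heq : (-(Jmat k)) * blockSub B t = ((-(Jmat m)) * B).submatrix (emb t) (emb t) := by
      rw [Matrix.neg_mul, Matrix.neg_mul, Jmul_submatrix]
      rfl
    rw [heq]
    exact h.submatrix _

end PfAux

theorem pf_nonneg_of_posSemidef (m : ℕ) (B : Matrix (Fin (2 * m)) (Fin (2 * m)) ℂ)
    (hB : Bᵀ = -B) (h : ((-(Jmat m)) * B).PosSemidef) :
    (∀ S : Finset (Fin m), 0 ≤ pf (blockSub B ⇑(S.orderEmbOfFin rfl))) ∧ 0 ≤ pf B := by
  constructor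
  · intro S
    exact PfAux.pf_nonneg_sub B hB h _
  · exact PfAux.pf_nonneg_main B hB h
end

section
/- Let L be an operator on a Hilbert space with block structure such that -JL is Hermitian and non-negative definite, α a real number with ‖αL‖ < 1, and K_α = L(I + αJL)^{-1}. Then -JK_α is Hermitian and non-negative definite. -/
open Matrix
open scoped Classical ComplexOrder Matrix.Norms.L2Operator
open scoped MatrixOrder

lemma Jmat_conjTranspose (m : ℕ) : (Jmat m)ᴴ = -(Jmat m) := by
  ext i j
  rw [conjTranspose_apply, neg_apply]; simp only [Jmat]
  by_cases h1 : j.val % 2 = 0 ∧ i.val = j.val + 1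
  · have h2 : ¬(i.val % 2 = 0 ∧ j.val = i.val + 1) := by omega
    rw [if_pos h1, if_neg h2, if_pos h1]
    simp
  · by_cases h2 : i.val % 2 = 0 ∧ j.val = i.val + 1
    · rw [if_neg h1, if_pos h2, if_pos h2]
      simp
    · rw [if_neg h1, if_neg h2, if_neg h2, if_neg h1]
      simp

lemma Jmat_mul_Jmat (m : ℕ) : Jmat m * Jmat m = -1 := by
  ext i k
  rw [mul_apply]
  by_cases hi : i.val % 2 = 0
  · have hlt : i.val + 1 < 2 * m := by have := i.isLt; omega
    rw [Finset.sum_eq_single (⟨i.val + 1, hlt⟩ : Fin (2 * m))]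
    · have e1 : Jmat m i ⟨i.val + 1, hlt⟩ = 1 := by
        simp [Jmat, hi]
      have e2 : Jmat m ⟨i.val + 1, hlt⟩ k = if i = k then -1 else 0 := by
        simp only [Jmat, Fin.val_mk]
        rw [if_neg (show ¬((i.val + 1) % 2 = 0 ∧ k.val = i.val + 1 + 1) by omega)]
        by_cases hik : i = k
        · have hik' : i.val = k.val := congrArg Fin.val hik
          rw [if_pos (show k.val % 2 = 0 ∧ i.val + 1 = k.val + 1 by omega), if_pos hik]
        · rw [if_neg (show ¬(k.val % 2 = 0 ∧ i.val + 1 = k.val + 1) from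
            fun hcon => hik (Fin.ext (by omega))), if_neg hik]
      rw [e1, e2, one_mul, neg_apply, one_apply]
      split_ifs <;> norm_num
    · intro b _ hb
      have hbv : b.val ≠ i.val + 1 := fun h => hb (Fin.ext h)
      have e0 : Jmat m i b = 0 := by
        simp only [Jmat]
        rw [if_neg (show ¬(i.val % 2 = 0 ∧ b.val = i.val + 1) from fun hcon => hbv hcon.2),
          if_neg (show ¬(b.val % 2 = 0 ∧ i.val = b.val + 1) from fun hcon => by omega)]
      rw [e0, zero_mul]
    · exact fun h => absurd (Finset.mem_univ _) h
  · have hi1 : i.val % 2 = 1 := by omega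
    have hlt : i.val - 1 < 2 * m := by have := i.isLt; omega
    rw [Finset.sum_eq_single (⟨i.val - 1, hlt⟩ : Fin (2 * m))]
    · have e1 : Jmat m i ⟨i.val - 1, hlt⟩ = -1 := by
        simp only [Jmat, Fin.val_mk]
        rw [if_neg (show ¬(i.val % 2 = 0 ∧ i.val - 1 = i.val + 1) by omega),
          if_pos (show (i.val - 1) % 2 = 0 ∧ i.val = (i.val - 1) + 1 by omega)]
      have e2 : Jmat m ⟨i.val - 1, hlt⟩ k = if i = k then 1 else 0 := by
        simp only [Jmat, Fin.val_mk]
        by_cases hik : i = k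
        · have hik' : i.val = k.val := congrArg Fin.val hik
          rw [if_pos (show (i.val - 1) % 2 = 0 ∧ k.val = (i.val - 1) + 1 by omega), if_pos hik]
        · rw [if_neg (show ¬((i.val - 1) % 2 = 0 ∧ k.val = (i.val - 1) + 1) from
              fun hcon => hik (Fin.ext (by omega))),
            if_neg (show ¬(k.val % 2 = 0 ∧ i.val - 1 = k.val + 1) by omega), if_neg hik]
      rw [e1, e2, neg_apply, one_apply]
      split_ifs <;> norm_num
    · intro b _ hb
      have hbv : b.val ≠ i.val - 1 := fun h => hb (Fin.ext h)
      have e0 : Jmat m i b = 0 := by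
        simp only [Jmat]
        rw [if_neg (show ¬(i.val % 2 = 0 ∧ b.val = i.val + 1) from fun hcon => by omega),
          if_neg (show ¬(b.val % 2 = 0 ∧ i.val = b.val + 1) from fun hcon => hbv (by omega))]
      rw [e0, zero_mul]
    · exact fun h => absurd (Finset.mem_univ _) h

lemma Jmat_conjTranspose_mul (m : ℕ) : (Jmat m)ᴴ * Jmat m = 1 := by
  rw [Jmat_conjTranspose, neg_mul, Jmat_mul_Jmat, neg_neg]

/-- `J` preserves the dot-product quadratic form. -/
lemma Jmat_dot (m : ℕ) (x : Fin (2 * m) → ℂ) :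
    star (Jmat m *ᵥ x) ⬝ᵥ (Jmat m *ᵥ x) = star x ⬝ᵥ x := by
  rw [star_mulVec, dotProduct_mulVec, vecMul_vecMul, Jmat_conjTranspose_mul, vecMul_one]

/-- If `-JL` is Hermitian non-negative definite and `‖αL‖ < 1` (operator norm),
then `-JK_α` is Hermitian non-negative definite, where `K_α = L (I + αJL)⁻¹`. -/
theorem negJ_K_posSemidef (m : ℕ) (L : Matrix (Fin (2 * m)) (Fin (2 * m)) ℂ)
    (hskew : Lᵀ = -L) (α : ℝ) (hL : ((-(Jmat m)) * L).PosSemidef)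
    (hnorm : ‖(α : ℂ) • L‖ < 1) :
    ((-(Jmat m)) * (L * (1 + (α : ℂ) • (Jmat m * L))⁻¹)).PosSemidef := by
  obtain ⟨M, hMdef⟩ : ∃ M', M' = (-(Jmat m)) * L := ⟨_, rfl⟩
  obtain ⟨S, hSdef⟩ : ∃ S', S' = 1 - (α : ℂ) • M := ⟨_, rfl⟩
  have hM : M.PosSemidef := by rw [hMdef]; exact hL
  have hgoal : (-(Jmat m)) * (L * (1 + (α : ℂ) • (Jmat m * L))⁻¹) = M * S⁻¹ := by
    rw [hSdef, hMdef]
    simp only [neg_mul, smul_neg, sub_neg_eq_add, mul_assoc]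
  rw [hgoal]
  have hstarα : star ((α : ℂ)) = (α : ℂ) := by
    simp [Complex.star_def, Complex.conj_ofReal]
  have hSH : S.IsHermitian := by
    rw [hSdef]
    show _ = _
    rw [conjTranspose_sub, conjTranspose_smul, conjTranspose_one, hM.1.eq, hstarα]
  -- S is positive definite
  have hSpd : S.PosDef := by
    refine PosDef.of_dotProduct_mulVec_pos hSH fun x hx => ?_
    have hxpos : 0 < ‖(WithLp.equiv 2 (Fin (2 * m) → ℂ)).symm x‖ := by
      rw [norm_pos_iff]
      exact fun h => hx (by simpa using congrArg (WithLp.equiv 2 (Fin (2 * m) → ℂ)) h)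
    have hherm : ((α : ℂ) • M)ᴴ = (α : ℂ) • M := by
      rw [conjTranspose_smul, hM.1.eq, hstarα]
    have hc : star x ⬝ᵥ (((α : ℂ) • M) *ᵥ x)
        = star (Jmat m *ᵥ x) ⬝ᵥ (((α : ℂ) • L) *ᵥ x) := by
      rw [hMdef, ← mul_smul_comm, ← mulVec_mulVec, dotProduct_mulVec]
      congr 1
      rw [star_mulVec, Jmat_conjTranspose]
    -- the quadratic form value is real
    have hcim : (star x ⬝ᵥ (((α : ℂ) • M) *ᵥ x)).im = 0 := by
      have hsc : (starRingEnd ℂ) (star x ⬝ᵥ (((α : ℂ) • M) *ᵥ x))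
          = star x ⬝ᵥ (((α : ℂ) • M) *ᵥ x) := by
        calc (starRingEnd ℂ) (star x ⬝ᵥ (((α : ℂ) • M) *ᵥ x))
            = star (((α : ℂ) • M) *ᵥ x) ⬝ᵥ x := (star_dotProduct _ _).symm
          _ = (star x ᵥ* ((α : ℂ) • M)ᴴ) ⬝ᵥ x := by rw [star_mulVec]
          _ = star x ⬝ᵥ (((α : ℂ) • M)ᴴ *ᵥ x) := by rw [← dotProduct_mulVec]
          _ = star x ⬝ᵥ (((α : ℂ) • M) *ᵥ x) := by rw [hherm]
      exact Complex.conj_eq_iff_im.mp hsc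
    -- norm bound
    have hcnorm : ‖star x ⬝ᵥ (((α : ℂ) • M) *ᵥ x)‖
        < ‖(WithLp.equiv 2 (Fin (2 * m) → ℂ)).symm x‖ ^ 2 := by
      have h1 : star x ⬝ᵥ (((α : ℂ) • M) *ᵥ x)
          = inner ℂ ((WithLp.equiv 2 (Fin (2 * m) → ℂ)).symm (Jmat m *ᵥ x))
              ((WithLp.equiv 2 (Fin (2 * m) → ℂ)).symm (((α : ℂ) • L) *ᵥ x)) := by
        rw [hc, dotProduct_comm]; rfl
      have h2 : ‖star x ⬝ᵥ (((α : ℂ) • M) *ᵥ x)‖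
          ≤ ‖(WithLp.equiv 2 (Fin (2 * m) → ℂ)).symm (Jmat m *ᵥ x)‖
            * ‖(WithLp.equiv 2 (Fin (2 * m) → ℂ)).symm (((α : ℂ) • L) *ᵥ x)‖ := by
        rw [h1]; exact norm_inner_le_norm _ _
      have hwn : ‖(WithLp.equiv 2 (Fin (2 * m) → ℂ)).symm (Jmat m *ᵥ x)‖
          = ‖(WithLp.equiv 2 (Fin (2 * m) → ℂ)).symm x‖ := by
        have e1 : (inner ℂ ((WithLp.equiv 2 (Fin (2 * m) → ℂ)).symm (Jmat m *ᵥ x))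
            ((WithLp.equiv 2 (Fin (2 * m) → ℂ)).symm (Jmat m *ᵥ x)) : ℂ)
            = inner ℂ ((WithLp.equiv 2 (Fin (2 * m) → ℂ)).symm x)
              ((WithLp.equiv 2 (Fin (2 * m) → ℂ)).symm x) := by
          exact (dotProduct_comm _ _).trans ((Jmat_dot m x).trans (dotProduct_comm _ _))
        have e2 := inner_self_eq_norm_sq (𝕜 := ℂ)
          ((WithLp.equiv 2 (Fin (2 * m) → ℂ)).symm (Jmat m *ᵥ x))
        have e3 := inner_self_eq_norm_sq (𝕜 := ℂ)
          ((WithLp.equiv 2 (Fin (2 * m) → ℂ)).symm x)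
        have e4 : ‖(WithLp.equiv 2 (Fin (2 * m) → ℂ)).symm (Jmat m *ᵥ x)‖ ^ 2
            = ‖(WithLp.equiv 2 (Fin (2 * m) → ℂ)).symm x‖ ^ 2 := by
          rw [← e2, ← e3, e1]
        nlinarith [norm_nonneg ((WithLp.equiv 2 (Fin (2 * m) → ℂ)).symm (Jmat m *ᵥ x)),
          norm_nonneg ((WithLp.equiv 2 (Fin (2 * m) → ℂ)).symm x)]
      have hvn : ‖(WithLp.equiv 2 (Fin (2 * m) → ℂ)).symm (((α : ℂ) • L) *ᵥ x)‖
          ≤ ‖(α : ℂ) • L‖ * ‖(WithLp.equiv 2 (Fin (2 * m) → ℂ)).symm x‖ :=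
        l2_opNorm_mulVec ((α : ℂ) • L) ((WithLp.equiv 2 (Fin (2 * m) → ℂ)).symm x)
      calc ‖star x ⬝ᵥ (((α : ℂ) • M) *ᵥ x)‖
          ≤ ‖(WithLp.equiv 2 (Fin (2 * m) → ℂ)).symm (Jmat m *ᵥ x)‖
            * ‖(WithLp.equiv 2 (Fin (2 * m) → ℂ)).symm (((α : ℂ) • L) *ᵥ x)‖ := h2
        _ = ‖(WithLp.equiv 2 (Fin (2 * m) → ℂ)).symm x‖
            * ‖(WithLp.equiv 2 (Fin (2 * m) → ℂ)).symm (((α : ℂ) • L) *ᵥ x)‖ := by rw [hwn]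
        _ ≤ ‖(WithLp.equiv 2 (Fin (2 * m) → ℂ)).symm x‖
            * (‖(α : ℂ) • L‖ * ‖(WithLp.equiv 2 (Fin (2 * m) → ℂ)).symm x‖) :=
          mul_le_mul_of_nonneg_left hvn (norm_nonneg _)
        _ = ‖(α : ℂ) • L‖ * (‖(WithLp.equiv 2 (Fin (2 * m) → ℂ)).symm x‖
            * ‖(WithLp.equiv 2 (Fin (2 * m) → ℂ)).symm x‖) := by ring
        _ < 1 * (‖(WithLp.equiv 2 (Fin (2 * m) → ℂ)).symm x‖
            * ‖(WithLp.equiv 2 (Fin (2 * m) → ℂ)).symm x‖) :=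
          mul_lt_mul_of_pos_right hnorm (mul_pos hxpos hxpos)
        _ = ‖(WithLp.equiv 2 (Fin (2 * m) → ℂ)).symm x‖ ^ 2 := by ring
    -- conclude
    have hxx : star x ⬝ᵥ x = ((‖(WithLp.equiv 2 (Fin (2 * m) → ℂ)).symm x‖ : ℂ)) ^ 2 := by
      rw [dotProduct_comm]
      exact inner_self_eq_norm_sq_to_K (𝕜 := ℂ) ((WithLp.equiv 2 (Fin (2 * m) → ℂ)).symm x)
    have hsplit : star x ⬝ᵥ (S *ᵥ x)
        = ((‖(WithLp.equiv 2 (Fin (2 * m) → ℂ)).symm x‖ : ℂ)) ^ 2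
          - star x ⬝ᵥ (((α : ℂ) • M) *ᵥ x) := by
      rw [hSdef, sub_mulVec, one_mulVec, dotProduct_sub, hxx]
    rw [hsplit, Complex.lt_def]
    constructor
    · have hre : (star x ⬝ᵥ (((α : ℂ) • M) *ᵥ x)).re ≤ ‖star x ⬝ᵥ (((α : ℂ) • M) *ᵥ x)‖ := by
        exact Complex.re_le_norm _
      simp only [Complex.zero_re, Complex.sub_re]
      have h5 : (((‖(WithLp.equiv 2 (Fin (2 * m) → ℂ)).symm x‖ : ℂ)) ^ 2).re
          = ‖(WithLp.equiv 2 (Fin (2 * m) → ℂ)).symm x‖ ^ 2 := by norm_cast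
      rw [h5]
      linarith
    · simp only [Complex.zero_im, Complex.sub_im, hcim]
      have h6 : (((‖(WithLp.equiv 2 (Fin (2 * m) → ℂ)).symm x‖ : ℂ)) ^ 2).im = 0 := by
        norm_cast
      rw [h6]; ring
  -- S * M is PSD via the square root of M
  have hNH : (CFC.sqrt M) ᴴ = CFC.sqrt M := (CFC.sqrt_nonneg M).posSemidef.1.eq
  have hNN : CFC.sqrt M * CFC.sqrt M = M := CFC.sqrt_mul_sqrt_self M hM.nonneg
  have hNM : CFC.sqrt M * M = M * CFC.sqrt M := by
    calc CFC.sqrt M * M = CFC.sqrt M * (CFC.sqrt M * CFC.sqrt M) := by rw [hNN]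
      _ = (CFC.sqrt M * CFC.sqrt M) * CFC.sqrt M := by rw [mul_assoc]
      _ = M * CFC.sqrt M := by rw [hNN]
  have e5 : CFC.sqrt M * M * CFC.sqrt M = M * M := by rw [hNM, mul_assoc, hNN]
  have hSM : S * M = (CFC.sqrt M) ᴴ * S * CFC.sqrt M := by
    rw [hNH, hSdef, sub_mul, one_mul, smul_mul_assoc, mul_sub, mul_one, sub_mul,
      mul_smul_comm, smul_mul_assoc, hNN, e5]
  have hSMpsd : (S * M).PosSemidef := by
    rw [hSM]
    exact hSpd.posSemidef.conjTranspose_mul_mul_same (CFC.sqrt M)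
  -- conjugate by S⁻¹
  have hdet : IsUnit S.det := (Matrix.isUnit_iff_isUnit_det S).mp hSpd.isUnit
  have hfin : M * S⁻¹ = (S⁻¹)ᴴ * (S * M) * S⁻¹ := by
    rw [conjTranspose_nonsing_inv, hSH.eq, ← mul_assoc,
      Matrix.nonsing_inv_mul S hdet, one_mul]
  rw [hfin]
  exact hSMpsd.conjTranspose_mul_mul_same S⁻¹
end
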